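/- arXiv:1910.10899 — 6 statements merged into one kernel-verified Lean document; each statement's English description precedes it below -/
import Mathlib

section
/- There exists a Banach limit B on ℓ∞ which is invariant under every dilation operator, i.e. B(σ_m x) = B(x) for all m ≥ 2 and all x ∈ ℓ∞, but which is not invariant under the Cesàro operator, i.e. there exists x ∈ ℓ∞ with B(Cx) ≠ B(x). In other words, the inclusion 𝔅(C) ⊆ ∩_{m≥2} 𝔅(σ_m) is proper. -/
open Filter BoundedContinuousFunction

noncomputable section

/-- `ℓ∞`: the space of bounded real sequences (indexed from `0`). -/
abbrev LInf : Type := BoundedContinuousFunction ℕ ℝ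

/-- The translation (shift) operator `T(x₁,x₂,…) = (0,x₁,x₂,…)` (0-indexed). -/
def shift (x : LInf) : LInf :=
  BoundedContinuousFunction.ofNormedAddCommGroup
    (fun n => if n = 0 then 0 else x (n - 1)) continuous_of_discreteTopology ‖x‖
    (by
      intro n
      rcases n with _ | n
      · simp [norm_nonneg x]
      · simpa using x.norm_coe_le_norm n)

/-- The Cesàro operator: the `n`-th entry (0-indexed) is the average of the first `n + 1`
entries, i.e. `(Cx)ₙ = (1/n) ∑_{k=1}^{n} x_k` in the 1-indexed notation. -/
def cesaro (x : LInf) : LInf :=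
  BoundedContinuousFunction.ofNormedAddCommGroup
    (fun n => (↑(n + 1))⁻¹ * ∑ k ∈ Finset.range (n + 1), x k)
    continuous_of_discreteTopology ‖x‖
    (by
      intro n
      have hn : (0:ℝ) < (n:ℝ) + 1 := by positivity
      have h1 : ‖∑ k ∈ Finset.range (n + 1), x k‖ ≤ ‖x‖ * ((n:ℝ) + 1) := by
        calc ‖∑ k ∈ Finset.range (n + 1), x k‖ ≤ ∑ k ∈ Finset.range (n + 1), ‖x‖ :=
              norm_sum_le_of_le _ (fun k _ => x.norm_coe_le_norm k)
          _ = ‖x‖ * ((n:ℝ) + 1) := by simp [mul_comm]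
      rw [norm_mul, norm_inv]
      have h2 : ‖((n+1 : ℕ) : ℝ)‖ = (n:ℝ) + 1 := by
        push_cast
        rw [Real.norm_eq_abs, abs_of_pos hn]
      rw [h2, inv_mul_le_iff₀ hn]
      exact h1.trans_eq (mul_comm _ _))

/-- The dilation operator `σ_m`, repeating each entry `m` times
(0-indexed: `(σ_m x)ₙ = x_{⌊n/m⌋}`, i.e. `(σ_m x)ₙ = x_{⌈n/m⌉}` in 1-indexed notation). -/
def dil (m : ℕ) (x : LInf) : LInf :=
  x.compContinuous ⟨fun n => n / m, continuous_of_discreteTopology⟩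

/-- A Banach limit: a positive, normalised, shift-invariant continuous linear
functional on `ℓ∞`. -/
def IsBanachLimit (B : LInf →L[ℝ] ℝ) : Prop :=
  (∀ x : LInf, (∀ n, 0 ≤ x n) → 0 ≤ B x) ∧ B 1 = 1 ∧ ∀ x : LInf, B (shift x) = B x

open Finset Topology

namespace DilBL

/-- smooth modulus -/
def R (k : ℕ) : ℕ := (Nat.factorial (k+1)) ^ (k+1)

def Q (k : ℕ) : ℕ := k + 1

def tau (k : ℕ) : ℕ := (R k).divisors.card

def P : ℕ → ℕ
  | 0 => tau 0 * Q 0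
  | (k+1) => (k+2) * tau (k+1) * Q (k+1) * (2 * P k * R k)

def M (k : ℕ) : ℕ := 2 * P k * R k

/-- `Mp k` is the bound on windows of scales `< k`. -/
def Mp : ℕ → ℕ
  | 0 => 0
  | (k+1) => M k

lemma R_pos (k : ℕ) : 0 < R k := pow_pos (Nat.factorial_pos _) _

lemma tau_pos (k : ℕ) : 0 < tau k :=
  Finset.card_pos.mpr ⟨1, Nat.one_mem_divisors.mpr (R_pos k).ne'⟩

lemma Q_pos (k : ℕ) : 0 < Q k := k.succ_pos

lemma P_pos (k : ℕ) : 0 < P k := by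
  induction k with
  | zero => exact Nat.mul_pos (tau_pos 0) (Q_pos 0)
  | succ k ih =>
    show 0 < (k+2) * tau (k+1) * Q (k+1) * (2 * P k * R k)
    exact Nat.mul_pos (Nat.mul_pos (Nat.mul_pos (Nat.succ_pos _) (tau_pos _)) (Q_pos _))
      (Nat.mul_pos (Nat.mul_pos two_pos ih) (R_pos k))

lemma M_pos (k : ℕ) : 0 < M k := by
  have := P_pos k; have := R_pos k
  simp only [M]; positivity

lemma hP1 (k : ℕ) : (k+1) * tau k * Q k ≤ P k := by
  cases k with
  | zero => simp [P]
  | succ k =>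
    show (k+2) * tau (k+1) * Q (k+1) ≤ (k+2) * tau (k+1) * Q (k+1) * (2 * P k * R k)
    exact Nat.le_mul_of_pos_right _ (by have := P_pos k; have := R_pos k; positivity)

lemma Q_le_P (k : ℕ) : Q k ≤ P k := by
  calc Q k ≤ (k+1) * tau k * Q k := by
        have h1 : 1 ≤ (k+1) * tau k := Nat.one_le_iff_ne_zero.mpr
          (by have := tau_pos k; positivity)
        nlinarith [Q_pos k]
    _ ≤ P k := hP1 k

lemma P_le_M (k : ℕ) : P k ≤ M k := by
  have := R_pos k
  calc P k = P k * 1 := (mul_one _).symm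
    _ ≤ 2 * P k * R k := by nlinarith [P_pos k]
    _ = M k := rfl

lemma M_le_P_succ (k : ℕ) : M k ≤ P (k+1) := by
  show M k ≤ (k+2) * tau (k+1) * Q (k+1) * M k
  exact Nat.le_mul_of_pos_left _
    (Nat.mul_pos (Nat.mul_pos (Nat.succ_pos _) (tau_pos _)) (Q_pos _))

lemma P_mono : Monotone P :=
  monotone_nat_of_le_succ (fun k => (P_le_M k).trans (M_le_P_succ k))

lemma M_mono : Monotone M :=
  monotone_nat_of_le_succ (fun k => (M_le_P_succ k).trans (P_le_M (k+1)))

lemma hP2 (k : ℕ) : (k+1) * Mp k ≤ P k := by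
  cases k with
  | zero => simp [Mp]
  | succ k =>
    show (k+2) * M k ≤ (k+2) * tau (k+1) * Q (k+1) * M k
    calc (k+2) * M k ≤ ((k+2) * tau (k+1) * Q (k+1)) * M k := by
          have h1 : (k+2) ≤ (k+2) * tau (k+1) * Q (k+1) := by
            have := tau_pos (k+1); have := Q_pos (k+1)
            calc (k+2) = (k+2) * 1 * 1 := by ring
              _ ≤ (k+2) * tau (k+1) * Q (k+1) := by
                  exact Nat.mul_le_mul (Nat.mul_le_mul_left _ (tau_pos (k+1))) (Q_pos (k+1))
          exact Nat.mul_le_mul_right _ h1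
      _ = (k+2) * tau (k+1) * Q (k+1) * M k := rfl


/-! ### The averaging functionals -/

def W (k : ℕ) (x : ℕ → ℝ) (d : ℕ) : ℝ :=
  ((Q k * d : ℕ) : ℝ)⁻¹ * ∑ j ∈ range (Q k * d), x (P k * d + j)

def A (k : ℕ) (x : ℕ → ℝ) : ℝ :=
  ((tau k : ℝ))⁻¹ * ∑ d ∈ (R k).divisors, W k x d

lemma avg_le {s : Finset ℕ} {f : ℕ → ℝ} {C : ℝ} (hs : s.Nonempty)
    (h : ∀ d ∈ s, f d ≤ C) : ((s.card : ℝ))⁻¹ * ∑ d ∈ s, f d ≤ C := by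
  have hc : (0:ℝ) < (s.card : ℝ) := by exact_mod_cast Finset.card_pos.mpr hs
  rw [inv_mul_le_iff₀ hc]
  calc ∑ d ∈ s, f d ≤ s.card • C := Finset.sum_le_card_nsmul s f C h
    _ = (s.card : ℝ) * C := by rw [nsmul_eq_mul]

lemma le_avg {s : Finset ℕ} {f : ℕ → ℝ} {C : ℝ} (hs : s.Nonempty)
    (h : ∀ d ∈ s, C ≤ f d) : C ≤ ((s.card : ℝ))⁻¹ * ∑ d ∈ s, f d := by
  have hc : (0:ℝ) < (s.card : ℝ) := by exact_mod_cast Finset.card_pos.mpr hs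
  rw [le_inv_mul_iff₀ hc]
  calc (s.card : ℝ) * C = s.card • C := by rw [nsmul_eq_mul]
    _ ≤ ∑ d ∈ s, f d := Finset.card_nsmul_le_sum s f C h

lemma avg_range_le {L : ℕ} (hL : 0 < L) {g : ℕ → ℝ} {C : ℝ}
    (h : ∀ j ∈ range L, g j ≤ C) : ((L:ℝ))⁻¹ * ∑ j ∈ range L, g j ≤ C := by
  have := avg_le (s := range L) ⟨0, mem_range.mpr hL⟩ h
  simpa using this

lemma le_avg_range {L : ℕ} (hL : 0 < L) {g : ℕ → ℝ} {C : ℝ}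
    (h : ∀ j ∈ range L, C ≤ g j) : C ≤ ((L:ℝ))⁻¹ * ∑ j ∈ range L, g j := by
  have := le_avg (s := range L) ⟨0, mem_range.mpr hL⟩ h
  simpa using this

variable {k d : ℕ} {x y : ℕ → ℝ} {C : ℝ}

lemma W_le (hd : 0 < d) (h : ∀ j, j < Q k * d → x (P k * d + j) ≤ C) :
    W k x d ≤ C :=
  avg_range_le (Nat.mul_pos (Q_pos k) hd) fun j hj => h j (mem_range.mp hj)

lemma le_W (hd : 0 < d) (h : ∀ j, j < Q k * d → C ≤ x (P k * d + j)) :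
    C ≤ W k x d :=
  le_avg_range (Nat.mul_pos (Q_pos k) hd) fun j hj => h j (mem_range.mp hj)

lemma abs_W_le (hd : 0 < d) (h : ∀ n, |x n| ≤ C) : |W k x d| ≤ C :=
  abs_le.mpr ⟨le_W hd fun j _ => (abs_le.mp (h _)).1,
    W_le hd fun j _ => (abs_le.mp (h _)).2⟩

lemma A_le_of_W (h : ∀ d ∈ (R k).divisors, W k x d ≤ C) : A k x ≤ C := by
  have := avg_le (s := (R k).divisors)
    ⟨1, Nat.one_mem_divisors.mpr (R_pos k).ne'⟩ h
  simpa [A, tau] using this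

lemma le_A_of_W (h : ∀ d ∈ (R k).divisors, C ≤ W k x d) : C ≤ A k x := by
  have := le_avg (s := (R k).divisors)
    ⟨1, Nat.one_mem_divisors.mpr (R_pos k).ne'⟩ h
  simpa [A, tau] using this

lemma abs_A_le (h : ∀ d ∈ (R k).divisors, |W k x d| ≤ C) : |A k x| ≤ C :=
  abs_le.mpr ⟨le_A_of_W fun d hd => (abs_le.mp (h d hd)).1,
    A_le_of_W fun d hd => (abs_le.mp (h d hd)).2⟩

lemma A_bound (h : ∀ n, |x n| ≤ C) : |A k x| ≤ C :=
  abs_A_le fun d hd => abs_W_le (Nat.pos_of_mem_divisors hd) h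

lemma A_window_le
    (h : ∀ d ∈ (R k).divisors, ∀ j, j < Q k * d → x (P k * d + j) ≤ C) :
    A k x ≤ C :=
  A_le_of_W fun d hd => W_le (Nat.pos_of_mem_divisors hd) (h d hd)

lemma A_nonneg (h : ∀ n, 0 ≤ x n) : 0 ≤ A k x :=
  le_A_of_W fun d hd => le_W (Nat.pos_of_mem_divisors hd) fun j _ => h _

lemma W_const (hd : 0 < d) : W k (fun _ => (1:ℝ)) d = 1 := by
  have hL : ((Q k * d : ℕ) : ℝ) ≠ 0 := by
    exact_mod_cast (Nat.mul_pos (Q_pos k) hd).ne'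
  rw [W, Finset.sum_const, Finset.card_range, nsmul_eq_mul, mul_one,
    inv_mul_cancel₀ hL]

lemma A_one : A k (fun _ => (1:ℝ)) = 1 := by
  have htau : ((tau k : ℕ) : ℝ) ≠ 0 := by exact_mod_cast (tau_pos k).ne'
  rw [A, Finset.sum_congr rfl (fun d hd => W_const (Nat.pos_of_mem_divisors hd)),
    Finset.sum_const, nsmul_eq_mul, mul_one]
  rw [show ((R k).divisors.card : ℝ) = ((tau k : ℕ) : ℝ) from rfl,
    inv_mul_cancel₀ htau]

lemma W_add : W k (fun n => x n + y n) d = W k x d + W k y d := by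
  simp [W, Finset.sum_add_distrib, mul_add]

lemma A_add : A k (fun n => x n + y n) = A k x + A k y := by
  simp only [A]
  rw [Finset.sum_congr rfl fun d _ => (W_add (k := k) (d := d) (x := x) (y := y)),
    Finset.sum_add_distrib, mul_add]

lemma W_smul (c : ℝ) : W k (fun n => c * x n) d = c * W k x d := by
  simp only [W, ← Finset.mul_sum]
  ring

lemma A_smul (c : ℝ) : A k (fun n => c * x n) = c * A k x := by
  simp only [A]
  rw [Finset.sum_congr rfl fun d _ => (W_smul (k := k) (d := d) (x := x) c),
    ← Finset.mul_sum]
  ring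


/-! ### Shift bound -/

lemma abs_avg_le {s : Finset ℕ} {f : ℕ → ℝ} {C : ℝ} (hs : s.Nonempty)
    (h : ∀ d ∈ s, |f d| ≤ C) : |((s.card : ℝ))⁻¹ * ∑ d ∈ s, f d| ≤ C :=
  abs_le.mpr ⟨le_avg hs fun d hd => (abs_le.mp (h d hd)).1,
    avg_le hs fun d hd => (abs_le.mp (h d hd)).2⟩

lemma A_sub : A k x - A k y
    = ((tau k : ℝ))⁻¹ * ∑ d ∈ (R k).divisors, (W k x d - W k y d) := by
  simp [A, Finset.sum_sub_distrib, mul_sub]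

lemma abs_A_sub_le (h : ∀ d ∈ (R k).divisors, |W k x d - W k y d| ≤ C) :
    |A k x - A k y| ≤ C := by
  rw [A_sub]
  have := abs_avg_le (s := (R k).divisors)
    ⟨1, Nat.one_mem_divisors.mpr (R_pos k).ne'⟩ h
  simpa [tau] using this

lemma W_shift (hd : 0 < d) :
    W k (fun n => if n = 0 then (0:ℝ) else x (n-1)) d - W k x d
      = ((Q k * d : ℕ) : ℝ)⁻¹
          * (x (P k * d - 1) - x ((P k * d - 1) + Q k * d)) := by
  have hv1 : 1 ≤ P k * d := Nat.one_le_iff_ne_zero.mpr (Nat.mul_pos (P_pos k) hd).ne'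
  set v := P k * d with hv
  set L := Q k * d with hL
  set g : ℕ → ℝ := fun j => x ((v - 1) + j) with hg
  have h1 : ∑ j ∈ range L, (fun n => if n = 0 then (0:ℝ) else x (n-1)) (v + j)
      = ∑ j ∈ range L, g j := by
    apply Finset.sum_congr rfl
    intro j _
    have hne : v + j ≠ 0 := by omega
    simp only [hg, if_neg hne]
    congr 1
    omega
  have h2 : ∑ j ∈ range L, x (v + j) = ∑ j ∈ range L, g (j + 1) := by
    apply Finset.sum_congr rfl
    intro j _
    simp only [hg]
    congr 1
    omega
  have h3 : ∑ j ∈ range L, g (j + 1) = (∑ j ∈ range L, g j) + g L - g 0 := by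
    have := Finset.sum_range_succ' g L
    have h4 := Finset.sum_range_succ g L
    rw [h4] at this
    linarith
  rw [W, W, h1, h2, h3]
  simp only [hg, add_zero]
  ring

lemma A_shift_bound (hC : ∀ n, |x n| ≤ C) :
    |A k (fun n => if n = 0 then (0:ℝ) else x (n-1)) - A k x| ≤ 2 * C / (k+1) := by
  apply abs_A_sub_le
  intro d hd
  have hd0 : 0 < d := Nat.pos_of_mem_divisors hd
  rw [W_shift hd0]
  have hL : ((k:ℝ) + 1) ≤ ((Q k * d : ℕ) : ℝ) := by
    have : k + 1 ≤ Q k * d := Nat.le_mul_of_pos_right _ hd0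
    exact_mod_cast this
  have hk : (0:ℝ) < (k:ℝ) + 1 := by positivity
  have hC0 : 0 ≤ C := le_trans (abs_nonneg _) (hC 0)
  have hLpos : (0:ℝ) < ((Q k * d : ℕ) : ℝ) := lt_of_lt_of_le hk hL
  rw [abs_mul, abs_inv, abs_of_pos hLpos]
  have hnum : |x (P k * d - 1) - x ((P k * d - 1) + Q k * d)| ≤ 2 * C := by
    calc |x (P k * d - 1) - x ((P k * d - 1) + Q k * d)|
        ≤ |x (P k * d - 1)| + |x ((P k * d - 1) + Q k * d)| := abs_sub _ _
      _ ≤ C + C := add_le_add (hC _) (hC _)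
      _ = 2 * C := by ring
  calc ((Q k * d : ℕ) : ℝ)⁻¹ * |x (P k * d - 1) - x ((P k * d - 1) + Q k * d)|
      ≤ ((Q k * d : ℕ) : ℝ)⁻¹ * (2 * C) := by
        apply mul_le_mul_of_nonneg_left hnum (by positivity)
    _ = (2 * C) / ((Q k * d : ℕ) : ℝ) := by ring
    _ ≤ 2 * C / ((k:ℝ) + 1) := div_le_div_of_nonneg_left (by positivity) hk hL

/-! ### Dilation bound -/

lemma sum_range_mul_div (f : ℕ → ℝ) {p : ℕ} (hp : 0 < p) (t : ℕ) :
    ∑ j ∈ range (p * t), f (j / p) = p * ∑ i ∈ range t, f i := by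
  induction t with
  | zero => simp
  | succ t ih =>
    have h1 : p * (t+1) = p * t + p := by ring
    rw [h1, Finset.sum_range_add, ih]
    have h2 : ∀ j ∈ range p, f ((p * t + j) / p) = f t := by
      intro j hj
      rw [Nat.mul_add_div hp, Nat.div_eq_of_lt (mem_range.mp hj), add_zero]
    rw [Finset.sum_congr rfl h2, Finset.sum_const, Finset.card_range,
      Finset.sum_range_succ, nsmul_eq_mul]
    ring

lemma W_dil {p : ℕ} (hp : 0 < p) (hpd : p ∣ d) :
    W k (fun n => x (n / p)) d = W k x (d / p) := by
  obtain ⟨d', rfl⟩ := hpd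
  rcases Nat.eq_zero_or_pos d' with rfl | hd'
  · simp [W]
  rw [Nat.mul_div_cancel_left d' hp]
  have h1 : Q k * (p * d') = p * (Q k * d') := by ring
  have h3 : ∀ j, (P k * (p * d') + j) / p = P k * d' + j / p := by
    intro j
    rw [show P k * (p * d') = p * (P k * d') by ring, Nat.mul_add_div hp]
  rw [W, W, h1]
  rw [Finset.sum_congr rfl (fun j _ => by rw [h3 j])]
  rw [sum_range_mul_div (fun i => x (P k * d' + i)) hp (Q k * d')]
  have hp' : ((p:ℕ):ℝ) ≠ 0 := by exact_mod_cast hp.ne'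
  have hQ : ((Q k * d' : ℕ):ℝ) ≠ 0 := by
    have : 0 < Q k * d' := Nat.mul_pos (Q_pos k) hd'
    exact_mod_cast this.ne'
  push_cast
  push_cast at hQ
  field_simp


lemma A_dil_prime {p : ℕ} (pp : p.Prime) (hpk : p ∣ Nat.factorial (k+1))
    (hC : ∀ n, |x n| ≤ C) :
    |A k (fun n => x (n / p)) - A k x| ≤ 2 * C / (k + 2) := by
  have hC0 : 0 ≤ C := le_trans (abs_nonneg _) (hC 0)
  have hR0 : R k ≠ 0 := (R_pos k).ne'
  have hp0 : 0 < p := pp.pos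
  have hpow : p ^ (k+1) ∣ R k := pow_dvd_pow_of_dvd hpk (k+1)
  set e := (R k).factorization p with he_def
  have he : k + 1 ≤ e := (Nat.Prime.pow_dvd_iff_le_factorization pp hR0).mp hpow
  have he1 : 1 ≤ e := le_trans (by omega) he
  set S := ordCompl[p] (R k) with hS_def
  have hS0 : S ≠ 0 := (Nat.ordCompl_pos p hR0).ne'
  have hRS : p ^ e * S = R k := Nat.ordProj_mul_ordCompl_eq_self (R k) p
  have hpS : ¬ p ∣ S := Nat.not_dvd_ordCompl pp hR0
  have hcop : Nat.Coprime (p ^ e) S :=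
    Nat.Coprime.pow_left e (Nat.coprime_ordCompl pp hR0)
  have hcop' : Nat.Coprime (p ^ (e-1)) S :=
    Nat.Coprime.pow_left _ (Nat.coprime_ordCompl pp hR0)
  have hpR : p ∣ R k := dvd_trans (dvd_pow_self p (Nat.succ_ne_zero k)) hpow
  have hpe : p * p ^ (e-1) = p ^ e := by
    rw [← pow_succ']
    congr 1
    omega
  have hRp : R k / p = p ^ (e-1) * S := by
    rw [← hRS, ← hpe, mul_assoc, Nat.mul_div_cancel_left _ hp0]
  have hRp0 : R k / p ≠ 0 := by
    rw [hRp]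
    exact Nat.mul_ne_zero (pow_ne_zero _ hp0.ne') hS0
  have hcardpow : ∀ j : ℕ, (p ^ j).divisors.card = j + 1 := by
    intro j
    rw [Nat.divisors_prime_pow pp, Finset.card_map, Finset.card_range]
  have htauR : tau k = (e + 1) * S.divisors.card := by
    rw [tau, ← hRS, Nat.Coprime.card_divisors_mul hcop, hcardpow]
  have htauRp : (R k / p).divisors.card = e * S.divisors.card := by
    rw [hRp, Nat.Coprime.card_divisors_mul hcop', hcardpow]
    congr 1
    omega
  have hsub : (R k / p).divisors ⊆ (R k).divisors :=
    Nat.divisors_subset_of_dvd hR0 (Nat.div_dvd_of_dvd hpR)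
  set xd : ℕ → ℝ := fun n => x (n / p) with hxd
  have hCxd : ∀ n, |xd n| ≤ C := fun n => hC _
  have hsplit := Finset.sum_filter_add_sum_filter_not (R k).divisors
    (fun d => p ∣ d) (W k xd)
  have hfil : ∑ d ∈ (R k).divisors.filter (fun d => p ∣ d), W k xd d
      = ∑ d ∈ (R k / p).divisors, W k x d := by
    have h1 : ∀ d ∈ (R k).divisors.filter (fun d => p ∣ d),
        W k xd d = W k x (d / p) :=
      fun d hd => W_dil hp0 (Finset.mem_filter.mp hd).2
    rw [Finset.sum_congr rfl h1]
    apply Finset.sum_nbij' (i := fun d => d / p) (j := fun d => d * p)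
    · intro d hd
      obtain ⟨hdR, hpd⟩ := Finset.mem_filter.mp hd
      obtain ⟨c, rfl⟩ := hpd
      rw [Nat.mul_div_cancel_left c hp0, Nat.mem_divisors]
      refine ⟨?_, hRp0⟩
      have hdvd : p * c ∣ p * (R k / p) := by
        rw [Nat.mul_div_cancel' hpR]
        exact (Nat.mem_divisors.mp hdR).1
      exact (mul_dvd_mul_iff_left hp0.ne').mp hdvd
    · intro d hd
      rw [Finset.mem_filter, Nat.mem_divisors]
      refine ⟨⟨?_, hR0⟩, dvd_mul_left p d⟩
      have := (Nat.mem_divisors.mp hd).1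
      calc d * p ∣ (R k / p) * p := mul_dvd_mul_right this p
        _ = R k := Nat.div_mul_cancel hpR
    · intro d hd
      exact Nat.div_mul_cancel (Finset.mem_filter.mp hd).2
    · intro d _
      exact Nat.mul_div_cancel d hp0
    · intro d _
      rfl
  have hsdiff : ∑ d ∈ (R k).divisors, W k x d
      = ∑ d ∈ (R k).divisors \ (R k / p).divisors, W k x d
        + ∑ d ∈ (R k / p).divisors, W k x d :=
    (Finset.sum_sdiff hsub).symm
  have key : A k xd - A k x
      = ((tau k : ℝ))⁻¹
        * ((∑ d ∈ (R k).divisors.filter (fun d => ¬ p ∣ d), W k xd d)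
            - ∑ d ∈ (R k).divisors \ (R k / p).divisors, W k x d) := by
    rw [A, A, ← hsplit, hfil, hsdiff]
    ring
  -- cardinality bounds
  have hSpos : 0 < S.divisors.card :=
    Finset.card_pos.mpr ⟨1, Nat.one_mem_divisors.mpr hS0⟩
  have hcard1 : ((R k).divisors.filter (fun d => ¬ p ∣ d)).card
      ≤ S.divisors.card := by
    apply Finset.card_le_card
    intro d hd
    obtain ⟨hdR, hnd⟩ := Finset.mem_filter.mp hd
    have hd0 : d ≠ 0 := (Nat.pos_of_mem_divisors hdR).ne'
    rw [Nat.mem_divisors]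
    refine ⟨?_, hS0⟩
    have hdc : Nat.Coprime d (p ^ e) :=
      ((pp.coprime_iff_not_dvd.mpr hnd).pow_left e).symm
    have : d ∣ S * p ^ e := by
      rw [mul_comm, hRS]
      exact (Nat.mem_divisors.mp hdR).1
    exact hdc.dvd_of_dvd_mul_right this
  have hcard2 : ((R k).divisors \ (R k / p).divisors).card = S.divisors.card := by
    rw [Finset.card_sdiff_of_subset hsub, htauRp, ← tau, htauR, Nat.succ_mul]
    omega
  -- sum bounds
  have hsum : ∀ s : Finset ℕ, s ⊆ (R k).divisors → ∀ y : ℕ → ℝ,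
      (∀ n, |y n| ≤ C) → |∑ d ∈ s, W k y d| ≤ (s.card : ℝ) * C := by
    intro s hs y hy
    calc |∑ d ∈ s, W k y d| ≤ ∑ d ∈ s, |W k y d| := Finset.abs_sum_le_sum_abs _ _
      _ ≤ s.card • C := Finset.sum_le_card_nsmul s _ C
          (fun d hd => abs_W_le (Nat.pos_of_mem_divisors (hs hd)) hy)
      _ = (s.card : ℝ) * C := by rw [nsmul_eq_mul]
  have h1 := hsum ((R k).divisors.filter (fun d => ¬ p ∣ d)) (Finset.filter_subset _ _) xd hCxd
  have h2 := hsum ((R k).divisors \ (R k / p).divisors) Finset.sdiff_subset x hC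
  rw [hcard2] at h2
  -- final numeric estimate
  set t := (S.divisors.card : ℝ) with ht_def
  have ht : (0:ℝ) < t := by rw [ht_def]; exact_mod_cast hSpos
  have htau' : ((tau k : ℕ) : ℝ) = ((e:ℝ) + 1) * t := by
    rw [htauR]; push_cast; ring
  have hfc : ((((R k).divisors.filter (fun d => ¬ p ∣ d)).card : ℕ) : ℝ) ≤ t := by
    rw [ht_def]; exact_mod_cast hcard1
  have habs : |(∑ d ∈ (R k).divisors.filter (fun d => ¬ p ∣ d), W k xd d)
      - ∑ d ∈ (R k).divisors \ (R k / p).divisors, W k x d| ≤ 2 * t * C := by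
    calc |(∑ d ∈ (R k).divisors.filter (fun d => ¬ p ∣ d), W k xd d)
        - ∑ d ∈ (R k).divisors \ (R k / p).divisors, W k x d|
        ≤ |∑ d ∈ (R k).divisors.filter (fun d => ¬ p ∣ d), W k xd d|
          + |∑ d ∈ (R k).divisors \ (R k / p).divisors, W k x d| := abs_sub _ _
      _ ≤ (((R k).divisors.filter (fun d => ¬ p ∣ d)).card : ℝ) * C + t * C :=
          add_le_add h1 h2
      _ ≤ t * C + t * C := by
          have := mul_le_mul_of_nonneg_right hfc hC0
          linarith
      _ = 2 * t * C := by ring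
  have htaupos : (0:ℝ) < ((tau k : ℕ) : ℝ) := by exact_mod_cast tau_pos k
  rw [key]
  rw [abs_mul]
  rw [abs_of_pos (inv_pos.mpr htaupos)]
  refine le_trans (mul_le_mul_of_nonneg_left habs (le_of_lt (inv_pos.mpr htaupos))) ?_
  rw [htau']
  have heq : ((((e:ℝ)+1)*t)⁻¹) * (2*t*C) = 2*C/((e:ℝ)+1) := by
    field_simp
  rw [heq]
  apply div_le_div_of_nonneg_left (by positivity) (by positivity)
  have h3 : (k:ℝ) + 1 ≤ (e:ℝ) := by exact_mod_cast he
  linarith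

/-! ### The special sequence -/

def inS (n : ℕ) : Prop :=
  ∃ k d, d ∈ (R k).divisors ∧ P k * d ≤ n ∧ n < P k * d + Q k * d

open Classical in
def x0f : ℕ → ℝ := fun n => if inS n then 1 else 0

lemma x0f_nonneg (n : ℕ) : 0 ≤ x0f n := by
  unfold x0f; split <;> norm_num

lemma x0f_le_one (n : ℕ) : x0f n ≤ 1 := by
  unfold x0f; split <;> norm_num

lemma abs_x0f_le (n : ℕ) : |x0f n| ≤ 1 :=
  abs_le.mpr ⟨by linarith [x0f_nonneg n], x0f_le_one n⟩

lemma x0f_eq_one {n : ℕ} (h : inS n) : x0f n = 1 := by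
  unfold x0f
  rw [if_pos h]

lemma A_x0 (k : ℕ) : A k x0f = 1 := by
  have hwin : ∀ d ∈ (R k).divisors, ∀ j, j < Q k * d → x0f (P k * d + j) = 1 := by
    intro d hd j hj
    exact x0f_eq_one ⟨k, d, hd, Nat.le_add_right _ _, by omega⟩
  apply le_antisymm
  · exact A_window_le fun d hd j hj => le_of_eq (hwin d hd j hj)
  · exact le_A_of_W fun d hd => le_W (Nat.pos_of_mem_divisors hd)
      fun j hj => ge_of_eq (hwin d hd j hj)

lemma x0_cover {k n j : ℕ} (hj : j ≤ n) (hn : n < M k) (hin : inS j) :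
    j < Mp k ∨ ∃ d ∈ (R k).divisors,
      P k * d ≤ n ∧ P k * d ≤ j ∧ j < P k * d + Q k * d := by
  obtain ⟨k', d', hd', h1, h2⟩ := hin
  have hd'pos := Nat.pos_of_mem_divisors hd'
  have hd'le : d' ≤ R k' := Nat.le_of_dvd (R_pos k') (Nat.mem_divisors.mp hd').1
  rcases lt_trichotomy k' k with h | rfl | h
  · left
    have hQP : Q k' ≤ P k' := Q_le_P k'
    have hjM : j < 2 * P k' * R k' := by
      calc j < P k' * d' + Q k' * d' := h2
        _ ≤ P k' * R k' + P k' * R k' :=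
            Nat.add_le_add (Nat.mul_le_mul_left _ hd'le) (Nat.mul_le_mul hQP hd'le)
        _ = 2 * P k' * R k' := by ring
    cases k with
    | zero => omega
    | succ k'' =>
      have hM : M k' ≤ M k'' := M_mono (by omega)
      show j < Mp (k''+1)
      simp only [Mp]
      have : (2 : ℕ) * P k' * R k' = M k' := rfl
      omega
  · right; exact ⟨d', hd', le_trans h1 hj, h1, h2⟩
  · exfalso
    have h3 : M k ≤ P k' := le_trans (M_le_P_succ k) (P_mono h)
    have h4 : P k' ≤ P k' * d' := Nat.le_mul_of_pos_right _ hd'pos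
    omega

lemma x0_count {k n : ℕ} (hn1 : P k ≤ n) (hn2 : n < M k) :
    ∑ j ∈ range (n+1), x0f j ≤ (Mp k : ℝ) + (n : ℝ) / ((k:ℝ)+1) := by
  classical
  set g1 : ℕ → ℝ := fun j => if j < Mp k then 1 else 0 with hg1_def
  set g2 : ℕ → ℝ := fun j => ∑ d ∈ (R k).divisors,
      (if P k * d ≤ n ∧ P k * d ≤ j ∧ j < P k * d + Q k * d then (1:ℝ) else 0)
    with hg2_def
  have hpt : ∀ j ∈ range (n+1), x0f j ≤ g1 j + g2 j := by
    intro j hj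
    have hjn : j ≤ n := by have := mem_range.mp hj; omega
    have hg1 : 0 ≤ g1 j := by simp only [hg1_def]; split <;> norm_num
    have hg2 : 0 ≤ g2 j :=
      Finset.sum_nonneg (fun d _ => by split <;> norm_num)
    by_cases hin : inS j
    · rcases x0_cover hjn hn2 hin with hcase | ⟨d, hd, ha, hb, hc⟩
      · have e1 : g1 j = 1 := by simp [hg1_def, hcase]
        have := x0f_le_one j
        linarith
      · have e2 : (1:ℝ) ≤ g2 j := by
          have hterm : (if P k * d ≤ n ∧ P k * d ≤ j ∧ j < P k * d + Q k * d
              then (1:ℝ) else 0) = 1 := by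
            rw [if_pos ⟨ha, hb, hc⟩]
          calc (1:ℝ) = _ := hterm.symm
            _ ≤ g2 j := Finset.single_le_sum
                (f := fun d => (if P k * d ≤ n ∧ P k * d ≤ j ∧ j < P k * d + Q k * d
                  then (1:ℝ) else 0))
                (fun d _ => by
                  by_cases h : P k * d ≤ n ∧ P k * d ≤ j ∧ j < P k * d + Q k * d <;>
                    simp [h]) hd
        have := x0f_le_one j
        linarith
    · have e0 : x0f j = 0 := by unfold x0f; rw [if_neg hin]
      rw [e0]
      linarith
  have hKpos : (0:ℝ) < (k:ℝ) + 1 := by positivity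
  have hPpos : (0:ℝ) < (P k : ℝ) := by exact_mod_cast P_pos k
  have part1 : ∑ j ∈ range (n+1), g1 j ≤ (Mp k : ℝ) := by
    have e1 : ∑ j ∈ range (n+1), g1 j
        = (((range (n+1)).filter (fun j => j < Mp k)).card : ℝ) := by
      simp [hg1_def, Finset.sum_boole]
    rw [e1]
    have hsubs : (range (n+1)).filter (fun j => j < Mp k) ⊆ range (Mp k) := by
      intro j hjm
      exact mem_range.mpr (Finset.mem_filter.mp hjm).2
    have := Finset.card_le_card hsubs
    rw [Finset.card_range] at this
    exact_mod_cast this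
  have part2 : ∑ j ∈ range (n+1), g2 j ≤ (n:ℝ) / ((k:ℝ)+1) := by
    simp only [hg2_def]
    rw [Finset.sum_comm]
    have hterm : ∀ d ∈ (R k).divisors,
        (∑ j ∈ range (n+1), if P k * d ≤ n ∧ P k * d ≤ j ∧ j < P k * d + Q k * d
          then (1:ℝ) else 0) ≤ (Q k : ℝ) * ((n:ℝ) / (P k : ℝ)) := by
      intro d hd
      by_cases hdn : P k * d ≤ n
      · have hb1 : (∑ j ∈ range (n+1), if P k * d ≤ n ∧ P k * d ≤ j ∧ j < P k * d + Q k * d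
            then (1:ℝ) else 0) ≤ ((Q k * d : ℕ) : ℝ) := by
          rw [Finset.sum_boole]
          have hsubs : (range (n+1)).filter
              (fun j => P k * d ≤ n ∧ P k * d ≤ j ∧ j < P k * d + Q k * d)
              ⊆ Finset.Ico (P k * d) (P k * d + Q k * d) := by
            intro j hjm
            have := (Finset.mem_filter.mp hjm).2
            exact Finset.mem_Ico.mpr ⟨this.2.1, this.2.2⟩
          have := Finset.card_le_card hsubs
          rw [Nat.card_Ico] at this
          have h5 : P k * d + Q k * d - P k * d = Q k * d := by omega
          rw [h5] at this
          exact_mod_cast this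
        refine le_trans hb1 ?_
        have hdr : (d : ℝ) ≤ (n:ℝ) / (P k : ℝ) := by
          rw [le_div_iff₀ hPpos]
          calc (d:ℝ) * (P k : ℝ) = ((P k * d : ℕ) : ℝ) := by push_cast; ring
            _ ≤ (n:ℝ) := by exact_mod_cast hdn
        calc ((Q k * d : ℕ) : ℝ) = (Q k : ℝ) * (d : ℝ) := by push_cast; ring
          _ ≤ (Q k : ℝ) * ((n:ℝ) / (P k : ℝ)) :=
              mul_le_mul_of_nonneg_left hdr (by positivity)
      · have hz : (∑ j ∈ range (n+1), if P k * d ≤ n ∧ P k * d ≤ j ∧ j < P k * d + Q k * d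
            then (1:ℝ) else 0) = 0 := by
          apply Finset.sum_eq_zero
          intro j _
          rw [if_neg (by tauto)]
        rw [hz]
        positivity
    calc ∑ d ∈ (R k).divisors, (∑ j ∈ range (n+1),
          if P k * d ≤ n ∧ P k * d ≤ j ∧ j < P k * d + Q k * d then (1:ℝ) else 0)
        ≤ (tau k : ℝ) * ((Q k : ℝ) * ((n:ℝ) / (P k : ℝ))) := by
          have := Finset.sum_le_card_nsmul (R k).divisors _ _ hterm
          rw [nsmul_eq_mul] at this
          exact_mod_cast this
      _ ≤ (n:ℝ) / ((k:ℝ)+1) := by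
          have hP1' : ((k:ℝ)+1) * (tau k : ℝ) * (Q k : ℝ) ≤ (P k : ℝ) := by
            have := hP1 k
            push_cast
            exact_mod_cast this
          have htQ : (tau k : ℝ) * (Q k : ℝ) ≤ (P k : ℝ) / ((k:ℝ)+1) := by
            rw [le_div_iff₀ hKpos]
            linarith [hP1']
          have hnP : (0:ℝ) ≤ (n:ℝ) / (P k : ℝ) := by positivity
          calc (tau k : ℝ) * ((Q k : ℝ) * ((n:ℝ) / (P k : ℝ)))
              = ((tau k : ℝ) * (Q k : ℝ)) * ((n:ℝ) / (P k : ℝ)) := by ring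
            _ ≤ ((P k : ℝ) / ((k:ℝ)+1)) * ((n:ℝ) / (P k : ℝ)) :=
                mul_le_mul_of_nonneg_right htQ hnP
            _ = (n:ℝ) / ((k:ℝ)+1) := by
                field_simp
  calc ∑ j ∈ range (n+1), x0f j ≤ ∑ j ∈ range (n+1), (g1 j + g2 j) :=
        Finset.sum_le_sum hpt
    _ = (∑ j ∈ range (n+1), g1 j) + ∑ j ∈ range (n+1), g2 j :=
        Finset.sum_add_distrib
    _ ≤ (Mp k : ℝ) + (n : ℝ) / ((k:ℝ)+1) := add_le_add part1 part2

lemma ces_x0_bound {k n : ℕ} (hn1 : P k ≤ n) (hn2 : n < M k) :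
    ((n+1 : ℕ) : ℝ)⁻¹ * ∑ j ∈ range (n+1), x0f j ≤ 2 / ((k:ℝ)+1) := by
  have hN1 : (0:ℝ) < ((n+1 : ℕ) : ℝ) := by positivity
  have hKpos : (0:ℝ) < (k:ℝ) + 1 := by positivity
  have hPpos : (0:ℝ) < (P k : ℝ) := by exact_mod_cast P_pos k
  have hnP : (P k : ℝ) ≤ (n:ℝ) := by exact_mod_cast hn1
  have hMpP : ((k:ℝ)+1) * (Mp k : ℝ) ≤ (P k : ℝ) := by
    have := hP2 k
    exact_mod_cast this
  rw [inv_mul_le_iff₀ hN1]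
  have hcount := x0_count hn1 hn2
  have h1 : (Mp k : ℝ) ≤ ((n:ℝ)+1) / ((k:ℝ)+1) := by
    rw [le_div_iff₀ hKpos]
    nlinarith
  have h2 : (n:ℝ) / ((k:ℝ)+1) ≤ ((n:ℝ)+1) / ((k:ℝ)+1) := by
    gcongr
    linarith
  have h3 : ((n+1:ℕ):ℝ) * (2/((k:ℝ)+1))
      = ((n:ℝ)+1) / ((k:ℝ)+1) + ((n:ℝ)+1) / ((k:ℝ)+1) := by
    push_cast
    ring
  rw [h3]
  linarith

lemma A_ces_x0 (k : ℕ) :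
    A k (fun n => ((n+1 : ℕ) : ℝ)⁻¹ * ∑ j ∈ range (n+1), x0f j) ≤ 2/((k:ℝ)+1) := by
  apply A_window_le
  intro d hd j hj
  have hdpos := Nat.pos_of_mem_divisors hd
  have hdle : d ≤ R k := Nat.le_of_dvd (R_pos k) (Nat.mem_divisors.mp hd).1
  apply ces_x0_bound
  · calc P k ≤ P k * d := Nat.le_mul_of_pos_right _ hdpos
      _ ≤ P k * d + j := Nat.le_add_right _ _
  · have hQP : Q k ≤ P k := Q_le_P k
    calc P k * d + j < P k * d + Q k * d := by omega
      _ ≤ P k * R k + P k * R k :=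
          Nat.add_le_add (Nat.mul_le_mul_left _ hdle) (Nat.mul_le_mul hQP hdle)
      _ = M k := by rw [M]; ring

lemma A_ces_x0_nonneg (k : ℕ) :
    0 ≤ A k (fun n => ((n+1 : ℕ) : ℝ)⁻¹ * ∑ j ∈ range (n+1), x0f j) := by
  apply A_nonneg
  intro n
  have : (0:ℝ) ≤ ∑ j ∈ range (n+1), x0f j :=
    Finset.sum_nonneg (fun j _ => x0f_nonneg j)
  positivity


/-! ### The Banach limit -/

def U : Ultrafilter ℕ := Filter.hyperfilter ℕ

lemma U_le_atTop : (U : Filter ℕ) ≤ Filter.atTop := by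
  rw [← Nat.cofinite_eq_atTop]
  exact Filter.hyperfilter_le_cofinite

lemma norm_apply_le (x : LInf) (n : ℕ) : |x n| ≤ ‖x‖ := by
  simpa [Real.norm_eq_abs] using x.norm_coe_le_norm n

lemma exists_lim (x : LInf) :
    ∃ c : ℝ, Filter.Tendsto (fun k => A k ⇑x) (U : Filter ℕ) (𝓝 c) := by
  have hbound : ∀ k : ℕ, A k ⇑x ∈ Set.Icc (-‖x‖) ‖x‖ := by
    intro k
    have h := A_bound (k := k) (x := ⇑x) (C := ‖x‖) (norm_apply_le x)
    exact Set.mem_Icc.mpr (abs_le.mp h)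
  have hmem : ∀ᶠ k in (U : Filter ℕ), A k ⇑x ∈ Set.Icc (-‖x‖) ‖x‖ :=
    Filter.Eventually.of_forall hbound
  have hle : (U.map (fun k => A k ⇑x) : Filter ℝ) ≤ 𝓟 (Set.Icc (-‖x‖) ‖x‖) := by
    rw [Ultrafilter.coe_map]
    exact Filter.le_principal_iff.mpr (Filter.mem_map.mpr hmem)
  obtain ⟨c, _, hc⟩ :=
    isCompact_Icc.ultrafilter_le_nhds (U.map (fun k => A k ⇑x)) hle
  exact ⟨c, by rwa [Filter.Tendsto, ← Ultrafilter.coe_map]⟩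

def B0 (x : LInf) : ℝ := (exists_lim x).choose

lemma hB0 (x : LInf) :
    Filter.Tendsto (fun k => A k ⇑x) (U : Filter ℕ) (𝓝 (B0 x)) :=
  (exists_lim x).choose_spec

lemma B0_unique {x : LInf} {c : ℝ}
    (h : Filter.Tendsto (fun k => A k ⇑x) (U : Filter ℕ) (𝓝 c)) : B0 x = c :=
  tendsto_nhds_unique (hB0 x) h

lemma B0_add (x y : LInf) : B0 (x + y) = B0 x + B0 y := by
  apply B0_unique
  have heq : (fun k => A k ⇑(x + y)) = fun k => A k ⇑x + A k ⇑y := by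
    funext k
    have hc : ⇑(x + y) = fun n => x n + y n := by funext n; simp
    rw [hc]
    exact A_add
  rw [heq]
  exact (hB0 x).add (hB0 y)

lemma B0_smul (c : ℝ) (x : LInf) : B0 (c • x) = c * B0 x := by
  apply B0_unique
  have heq : (fun k => A k ⇑(c • x)) = fun k => c * A k ⇑x := by
    funext k
    have hc : ⇑(c • x) = fun n => c * x n := by funext n; simp
    rw [hc]
    exact A_smul c
  rw [heq]
  exact (hB0 x).const_mul c

lemma B0_bound (x : LInf) : ‖B0 x‖ ≤ ‖x‖ := by
  rw [Real.norm_eq_abs, abs_le]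
  constructor
  · exact ge_of_tendsto (hB0 x)
      (Filter.Eventually.of_forall fun k =>
        (abs_le.mp (A_bound (norm_apply_le x))).1)
  · exact le_of_tendsto (hB0 x)
      (Filter.Eventually.of_forall fun k =>
        (abs_le.mp (A_bound (norm_apply_le x))).2)

lemma B0_nonneg {x : LInf} (h : ∀ n, 0 ≤ x n) : 0 ≤ B0 x :=
  ge_of_tendsto (hB0 x)
    (Filter.Eventually.of_forall fun k => A_nonneg (x := ⇑x) h)

lemma B0_one : B0 1 = 1 := by
  apply B0_unique
  have hc : ⇑(1 : LInf) = fun _ => (1:ℝ) := rfl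
  rw [hc]
  simp only [A_one]
  exact tendsto_const_nhds

lemma B0_eq_of_tendsto_sub {x y : LInf}
    (h : Filter.Tendsto (fun k => A k ⇑x - A k ⇑y) Filter.atTop (𝓝 0)) :
    B0 x = B0 y := by
  have h1 : Filter.Tendsto (fun k => A k ⇑x - A k ⇑y) (U : Filter ℕ)
      (𝓝 (B0 x - B0 y)) := (hB0 x).sub (hB0 y)
  have h2 := h.mono_left U_le_atTop
  have h3 := tendsto_nhds_unique h1 h2
  linarith

lemma tendsto_aux (c : ℝ) (b : ℝ) :
    Filter.Tendsto (fun k : ℕ => c / ((k:ℝ) + b)) Filter.atTop (𝓝 0) := by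
  apply Filter.Tendsto.div_atTop (tendsto_const_nhds)
  exact Filter.tendsto_atTop_add_const_right _ b tendsto_natCast_atTop_atTop

lemma B0_shift (x : LInf) : B0 (shift x) = B0 x := by
  apply B0_eq_of_tendsto_sub
  apply squeeze_zero_norm (a := fun k : ℕ => 2 * ‖x‖ / ((k:ℝ) + 1))
  · intro k
    have hcoe : ⇑(shift x) = fun n => if n = 0 then (0:ℝ) else x (n-1) := rfl
    rw [Real.norm_eq_abs, hcoe]
    exact A_shift_bound (norm_apply_le x)
  · exact tendsto_aux _ 1

lemma B0_dil_prime {p : ℕ} (pp : p.Prime) (x : LInf) : B0 (dil p x) = B0 x := by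
  apply B0_eq_of_tendsto_sub
  apply squeeze_zero_norm' (a := fun k : ℕ => 2 * ‖x‖ / ((k:ℝ) + 2))
  · filter_upwards [Filter.eventually_ge_atTop p] with k hk
    have hcoe : ⇑(dil p x) = fun n => x (n / p) := rfl
    rw [Real.norm_eq_abs, hcoe]
    exact A_dil_prime pp (Nat.dvd_factorial pp.pos (by omega)) (norm_apply_le x)
  · exact tendsto_aux _ 2

lemma dil_one_eq (x : LInf) : dil 1 x = x := by
  ext n
  show x (n / 1) = x n
  rw [Nat.div_one]

lemma dil_mul (p m : ℕ) (x : LInf) : dil (p * m) x = dil p (dil m x) := by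
  ext n
  show x (n / (p * m)) = x (n / p / m)
  rw [Nat.div_div_eq_div_mul]

lemma B0_dil : ∀ m : ℕ, 1 ≤ m → ∀ x : LInf, B0 (dil m x) = B0 x := by
  intro m
  induction m using Nat.strong_induction_on with
  | _ m ih =>
    intro hm x
    rcases eq_or_lt_of_le hm with h1 | h2
    · rw [← h1, dil_one_eq]
    · obtain ⟨p, pp, hpm⟩ := Nat.exists_prime_and_dvd (by omega : m ≠ 1)
      obtain ⟨m', rfl⟩ := hpm
      have hp2 := pp.two_le
      have hm' : 1 ≤ m' := by
        rcases Nat.eq_zero_or_pos m' with rfl | h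
        · omega
        · exact h
      have hlt : m' < p * m' := by nlinarith
      rw [dil_mul, B0_dil_prime pp, ih m' hlt hm']

/-! ### The special element -/

def x0 : LInf :=
  BoundedContinuousFunction.ofNormedAddCommGroup x0f continuous_of_discreteTopology 1
    (fun n => by simpa [Real.norm_eq_abs] using abs_x0f_le n)

lemma coe_x0 : ⇑x0 = x0f := rfl

lemma B0_x0 : B0 x0 = 1 := by
  apply B0_unique
  rw [coe_x0]
  simp only [A_x0]
  exact tendsto_const_nhds

lemma B0_ces_x0 : B0 (cesaro x0) = 0 := by
  apply B0_unique
  have hcoe : ⇑(cesaro x0)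
      = fun n => ((n+1 : ℕ) : ℝ)⁻¹ * ∑ j ∈ range (n+1), x0f j := rfl
  rw [hcoe]
  apply squeeze_zero_norm (a := fun k : ℕ => 2 / ((k:ℝ) + 1))
  · intro k
    rw [Real.norm_eq_abs, abs_le]
    refine ⟨?_, A_ces_x0 k⟩
    have h0 := A_ces_x0_nonneg k
    have h1 : (0:ℝ) ≤ 2 / ((k:ℝ) + 1) := by positivity
    linarith
  · exact (tendsto_aux 2 1).mono_left U_le_atTop

/-! ### The continuous linear functional -/

def Blin : LInf →ₗ[ℝ] ℝ where
  toFun := B0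
  map_add' := B0_add
  map_smul' := fun c x => by simpa using B0_smul c x

def Bfun : LInf →L[ℝ] ℝ :=
  LinearMap.mkContinuous Blin 1 (fun x => by
    rw [one_mul]
    exact B0_bound x)

lemma Bfun_apply (x : LInf) : Bfun x = B0 x := rfl

end DilBL

/-- There is a Banach limit invariant under every dilation `σ_m`, `m ≥ 2`, which is not
invariant under the Cesàro operator; i.e. the inclusion `𝔅(C) ⊆ ⋂_{m≥2} 𝔅(σ_m)` is proper. -/
theorem dilation_invariant_not_cesaro_invariant :
    ∃ B : LInf →L[ℝ] ℝ, IsBanachLimit B ∧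
      (∀ m : ℕ, 2 ≤ m → ∀ x : LInf, B (dil m x) = B x) ∧
      ∃ x : LInf, B (cesaro x) ≠ B x := by
  classical
  refine ⟨DilBL.Bfun, ⟨?_, ?_, ?_⟩, ?_, ?_⟩
  · intro x hx
    rw [DilBL.Bfun_apply]
    exact DilBL.B0_nonneg hx
  · rw [DilBL.Bfun_apply]
    exact DilBL.B0_one
  · intro x
    rw [DilBL.Bfun_apply, DilBL.Bfun_apply]
    exact DilBL.B0_shift x
  · intro m hm x
    rw [DilBL.Bfun_apply, DilBL.Bfun_apply]
    exact DilBL.B0_dil m (by omega) x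
  · refine ⟨DilBL.x0, ?_⟩
    rw [DilBL.Bfun_apply, DilBL.Bfun_apply, DilBL.B0_ces_x0, DilBL.B0_x0]
    norm_num

end
end

section
/- Let n ∈ ℕ, n ≥ 2. For every Banach limit B₁ with B₁(σ_n x) = B₁(x) for all x ∈ ℓ∞, every extreme point B₂ of the set 𝔅 of all Banach limits, and every real t ≥ 0, one has ‖B₁ − t B₂‖_{ℓ∞*} = 1 + t. -/
open Filter BoundedContinuousFunction

noncomputable section

/-- The set `𝔅` of all Banach limits, as a subset of the dual space of `ℓ∞`. -/
def BanachLimits : Set (LInf →L[ℝ] ℝ) := {B | IsBanachLimit B}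

set_option maxHeartbeats 1000000

lemma banachLimit_abs_le {B : LInf →L[ℝ] ℝ} (hB : IsBanachLimit B) (x : LInf) :
    |B x| ≤ ‖x‖ := by
  obtain ⟨hpos, hone, -⟩ := hB
  have hcoord : ∀ n : ℕ, |x n| ≤ ‖x‖ := by
    intro n
    simpa [Real.norm_eq_abs] using x.norm_coe_le_norm n
  have h1 : 0 ≤ B (‖x‖ • (1 : LInf) - x) := by
    apply hpos
    intro n
    have := (abs_le.mp (hcoord n)).2
    simp only [BoundedContinuousFunction.coe_sub, BoundedContinuousFunction.coe_smul,
      BoundedContinuousFunction.coe_one, Pi.sub_apply, Pi.smul_apply, Pi.one_apply,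
      smul_eq_mul, mul_one]
    linarith
  have h2 : 0 ≤ B (‖x‖ • (1 : LInf) + x) := by
    apply hpos
    intro n
    have := (abs_le.mp (hcoord n)).1
    simp only [BoundedContinuousFunction.coe_add, BoundedContinuousFunction.coe_smul,
      BoundedContinuousFunction.coe_one, Pi.add_apply, Pi.smul_apply, Pi.one_apply,
      smul_eq_mul, mul_one]
    linarith
  rw [map_sub, map_smul, hone, smul_eq_mul, mul_one] at h1
  rw [map_add, map_smul, hone, smul_eq_mul, mul_one] at h2
  exact abs_le.mpr ⟨by linarith, by linarith⟩

/-- If `B₁` is a `σ_n`-invariant Banach limit (`n ≥ 2`) and `B₂` an extreme point of the set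
of all Banach limits, then `‖B₁ - t B₂‖ = 1 + t` for every `t ≥ 0`.  The hypothesis `hT14`
is the input result [ASSU2, Theorem 14]: `‖B₁ - B₂‖ = 2` for any such pair. -/
theorem norm_dilation_invariant_sub_smul_extreme (n : ℕ) (hn : 2 ≤ n)
    (hT14 : ∀ B₁ B₂ : LInf →L[ℝ] ℝ, IsBanachLimit B₁ → (∀ x : LInf, B₁ (dil n x) = B₁ x) →
      B₂ ∈ Set.extremePoints ℝ BanachLimits → ‖B₁ - B₂‖ = 2)
    (B₁ B₂ : LInf →L[ℝ] ℝ) (hB₁ : IsBanachLimit B₁)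
    (hinv : ∀ x : LInf, B₁ (dil n x) = B₁ x)
    (hB₂ : B₂ ∈ Set.extremePoints ℝ BanachLimits)
    (t : ℝ) (ht : 0 ≤ t) :
    ‖B₁ - t • B₂‖ = 1 + t := by
  have hB2mem : IsBanachLimit B₂ := hB₂.1
  have h2 : ‖B₁ - B₂‖ = 2 := hT14 B₁ B₂ hB₁ hinv hB₂
  have hb1 : ∀ x, |B₁ x| ≤ ‖x‖ := banachLimit_abs_le hB₁
  have hb2 : ∀ x, |B₂ x| ≤ ‖x‖ := banachLimit_abs_le hB2mem
  have hn1 : ‖B₁‖ ≤ 1 := ContinuousLinearMap.opNorm_le_bound _ zero_le_one fun x => by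
    rw [Real.norm_eq_abs, one_mul]; exact hb1 x
  have hn2 : ‖B₂‖ ≤ 1 := ContinuousLinearMap.opNorm_le_bound _ zero_le_one fun x => by
    rw [Real.norm_eq_abs, one_mul]; exact hb2 x
  have upper : ‖B₁ - t • B₂‖ ≤ 1 + t := by
    have hsm : ‖t • B₂‖ ≤ t * ‖B₂‖ := by
      have := ContinuousLinearMap.opNorm_smul_le t B₂
      rwa [Real.norm_eq_abs, abs_of_nonneg ht] at this
    calc ‖B₁ - t • B₂‖ ≤ ‖B₁‖ + ‖t • B₂‖ := norm_sub_le B₁ (t • B₂)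
      _ ≤ 1 + t * 1 := add_le_add hn1 (hsm.trans (mul_le_mul_of_nonneg_left hn2 ht))
      _ = 1 + t := by ring
  refine le_antisymm upper ?_
  by_contra hlt
  push_neg at hlt
  set c := ‖B₁ - t • B₂‖ with hc
  have hc0 : 0 ≤ c := hc ▸ norm_nonneg (B₁ - t • B₂)
  have ht1 : (0:ℝ) < 1 + t := by linarith
  set ε : ℝ := (1 + t - c) / (4 * (1 + t)) with hε
  have hε0 : 0 < ε := div_pos (by linarith) (by linarith)
  have hεmul : (1 + t) * ε = (1 + t - c) / 4 := by
    rw [hε]; field_simp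
  have hε1 : ε ≤ 1/4 := by
    rw [hε, div_le_div_iff₀ (by linarith) (by norm_num)]
    nlinarith
  have hw : ∃ x : LInf, (2 - 2*ε) * ‖x‖ < ‖(B₁ - B₂) x‖ := by
    by_contra h
    push_neg at h
    have := ContinuousLinearMap.opNorm_le_bound (B₁ - B₂) (by linarith) h
    rw [h2] at this
    nlinarith
  obtain ⟨x, hx⟩ := hw
  have hx' : (2 - 2*ε) * ‖x‖ < |B₁ x - B₂ x| := by
    simpa [Real.norm_eq_abs, ContinuousLinearMap.sub_apply] using hx
  have hxn : 0 < ‖x‖ := by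
    by_contra h
    push_neg at h
    have hx0 : x = 0 := norm_le_zero_iff.mp h
    simp [hx0] at hx'
  have h1x := abs_le.mp (hb1 x)
  have h2x := abs_le.mp (hb2 x)
  have hfx : |B₁ x - t * B₂ x| ≤ c * ‖x‖ := by
    have h0 := (B₁ - t • B₂).le_opNorm x
    rw [Real.norm_eq_abs, ContinuousLinearMap.sub_apply,
      ContinuousLinearMap.smul_apply, smul_eq_mul, ← hc] at h0
    exact h0
  have hfxle := abs_le.mp hfx
  have efinal : (1 + t) * (1 - 2*ε) * ‖x‖ < c * ‖x‖ := by
    rcases lt_abs.mp hx' with h | h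
    · -- B₁ x large positive, B₂ x large negative
      have e1 : (1 - 2*ε) * ‖x‖ < B₁ x := by nlinarith [h2x.1]
      have e2 : (1 - 2*ε) * ‖x‖ < -B₂ x := by nlinarith [h1x.2]
      have e3 : t * ((1 - 2*ε) * ‖x‖) ≤ t * (-B₂ x) :=
        mul_le_mul_of_nonneg_left e2.le ht
      calc (1 + t) * (1 - 2*ε) * ‖x‖
          = (1 - 2*ε) * ‖x‖ + t * ((1 - 2*ε) * ‖x‖) := by ring
        _ < B₁ x + t * (-B₂ x) := by linarith
        _ = B₁ x - t * B₂ x := by ring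
        _ ≤ c * ‖x‖ := hfxle.2
    · -- -(B₁ x - B₂ x) large: B₂ x large positive, B₁ x large negative
      have e1 : (1 - 2*ε) * ‖x‖ < -B₁ x := by nlinarith [h2x.2]
      have e2 : (1 - 2*ε) * ‖x‖ < B₂ x := by nlinarith [h1x.1]
      have e3 : t * ((1 - 2*ε) * ‖x‖) ≤ t * B₂ x :=
        mul_le_mul_of_nonneg_left e2.le ht
      calc (1 + t) * (1 - 2*ε) * ‖x‖
          = (1 - 2*ε) * ‖x‖ + t * ((1 - 2*ε) * ‖x‖) := by ring
        _ < -B₁ x + t * B₂ x := by linarith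
        _ = -(B₁ x - t * B₂ x) := by ring
        _ ≤ c * ‖x‖ := by linarith [hfxle.1]
  have hclt : (1 + t) * (1 - 2*ε) < c :=
    lt_of_mul_lt_mul_right (by calc (1 + t) * (1 - 2*ε) * ‖x‖ < c * ‖x‖ := efinal) hxn.le
  nlinarith

end
end

section
/- Let n ∈ ℕ, n ≥ 2. For every Banach limit B₁ with B₁(σ_n x) = B₁(x) for all x ∈ ℓ∞, and every B₂ belonging to the closure in the dual-norm topology of the convex hull of the set of extreme points of 𝔅, one has ‖B₁ − B₂‖_{ℓ∞*} = 2. -/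
open Filter BoundedContinuousFunction

noncomputable section

/-- A positive normalised functional on `ℓ∞` has operator norm at most `1`. -/
lemma pos_norm_le_one (C : LInf →L[ℝ] ℝ) (hpos : ∀ x : LInf, (∀ n, 0 ≤ x n) → 0 ≤ C x)
    (h1 : C 1 = 1) : ‖C‖ ≤ 1 := by
  refine ContinuousLinearMap.opNorm_le_bound C zero_le_one (fun x => ?_)
  have h1' : ∀ n, |x n| ≤ ‖x‖ := fun n => x.norm_coe_le_norm n
  have hub : 0 ≤ C (‖x‖ • (1 : LInf) - x) := by
    refine hpos _ (fun m => ?_)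
    simp only [BoundedContinuousFunction.coe_sub, BoundedContinuousFunction.coe_smul,
      BoundedContinuousFunction.coe_one, Pi.sub_apply, Pi.smul_apply, Pi.one_apply,
      smul_eq_mul, mul_one, sub_nonneg]
    exact (abs_le.1 (h1' m)).2
  have hlb : 0 ≤ C (‖x‖ • (1 : LInf) + x) := by
    refine hpos _ (fun m => ?_)
    simp only [BoundedContinuousFunction.coe_add, BoundedContinuousFunction.coe_smul,
      BoundedContinuousFunction.coe_one, Pi.add_apply, Pi.smul_apply, Pi.one_apply,
      smul_eq_mul, mul_one]
    linarith [(abs_le.1 (h1' m)).1]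
  simp only [map_sub, map_add, map_smul, h1, smul_eq_mul, mul_one, sub_nonneg] at hub hlb
  rw [one_mul]
  exact abs_le.2 ⟨by linarith, hub⟩


set_option synthInstance.maxHeartbeats 1000000 in
set_option maxHeartbeats 2000000 in
/-- If `B₁` is a `σ_n`-invariant Banach limit (`n ≥ 2`) and `B₂` lies in the norm-closure of
the convex hull of the extreme points of the set of all Banach limits, then `‖B₁ - B₂‖ = 2`.
The hypothesis `hT14` is the input result [ASSU2, Theorem 14]: `‖B₁ - B₂‖ = 2` whenever `B₂`
is an extreme point. -/
theorem norm_dilation_invariant_sub_convex_closure_extreme (n : ℕ) (hn : 2 ≤ n)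
    (hT14 : ∀ B₁ B₂ : LInf →L[ℝ] ℝ, IsBanachLimit B₁ → (∀ x : LInf, B₁ (dil n x) = B₁ x) →
      B₂ ∈ Set.extremePoints ℝ BanachLimits → ‖B₁ - B₂‖ = 2)
    (B₁ B₂ : LInf →L[ℝ] ℝ) (hB₁ : IsBanachLimit B₁)
    (hinv : ∀ x : LInf, B₁ (dil n x) = B₁ x)
    (hB₂ : B₂ ∈ closure (convexHull ℝ (Set.extremePoints ℝ BanachLimits))) :
    ‖B₁ - B₂‖ = 2 := by
  -- The set of positive normalised functionals `C` that are "almost orthogonal" to `B₁`.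
  set S : Set (LInf →L[ℝ] ℝ) :=
    {C | (∀ x : LInf, (∀ n, 0 ≤ x n) → 0 ≤ C x) ∧ C 1 = 1 ∧
      ∀ ε : ℝ, 0 < ε → ∃ x : LInf, ‖x‖ ≤ 1 ∧ 1 - ε ≤ B₁ x ∧ C x ≤ -1 + ε} with hSdef
  have hB₁norm : ‖B₁‖ ≤ 1 := pos_norm_le_one B₁ hB₁.1 hB₁.2.1
  -- Every extreme point of `𝔅` lies in `S`, by Theorem 14.
  have hext : Set.extremePoints ℝ BanachLimits ⊆ S := by
    intro E hE
    have hEB : E ∈ BanachLimits := extremePoints_subset hE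
    replace hEB : IsBanachLimit E := hEB
    have hEnorm : ‖E‖ ≤ 1 := pos_norm_le_one E hEB.1 hEB.2.1
    refine ⟨hEB.1, hEB.2.1, fun ε hε => ?_⟩
    have h2 : (2 - ε : ℝ) < ‖B₁ - E‖ := by
      rw [hT14 B₁ E hB₁ hinv hE]; linarith
    obtain ⟨x, hx1, hx2⟩ := (B₁ - E).exists_lt_apply_of_lt_opNorm h2
    rw [ContinuousLinearMap.sub_apply, Real.norm_eq_abs] at hx2
    -- choose `y = ±x` so that `B₁ y - E y > 2 - ε`
    obtain ⟨y, hy1, hy2⟩ : ∃ y : LInf, ‖y‖ ≤ 1 ∧ 2 - ε < B₁ y - E y := by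
      rcases lt_abs.1 hx2 with h | h
      · exact ⟨x, hx1.le, h⟩
      · exact ⟨-x, by simpa using hx1.le, by simp only [map_neg]; linarith⟩
    have hB₁y : |B₁ y| ≤ 1 := by
      calc |B₁ y| ≤ ‖B₁‖ * ‖y‖ := B₁.le_opNorm y
        _ ≤ 1 * 1 := by
            exact mul_le_mul hB₁norm hy1 (norm_nonneg y) (le_trans (norm_nonneg B₁) hB₁norm)
        _ = 1 := one_mul 1
    have hEy : |E y| ≤ 1 := by
      calc |E y| ≤ ‖E‖ * ‖y‖ := E.le_opNorm y
        _ ≤ 1 * 1 := mul_le_mul hEnorm hy1 (norm_nonneg y) (le_trans (norm_nonneg E) hEnorm)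
        _ = 1 := one_mul 1
    refine ⟨y, hy1, ?_, ?_⟩
    · linarith [(abs_le.1 hEy).1]
    · linarith [(abs_le.1 hB₁y).2]
  -- `S` is convex.
  have hconv : Convex ℝ S := by
    intro C₁ hC₁ C₂ hC₂ a b ha hb hab
    refine ⟨?_, ?_, ?_⟩
    · intro x hx
      simp only [ContinuousLinearMap.add_apply, ContinuousLinearMap.smul_apply, smul_eq_mul]
      exact add_nonneg (mul_nonneg ha (hC₁.1 x hx)) (mul_nonneg hb (hC₂.1 x hx))
    · simp only [ContinuousLinearMap.add_apply, ContinuousLinearMap.smul_apply, smul_eq_mul,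
        hC₁.2.1, hC₂.2.1, mul_one]
      exact hab
    · intro ε hε
      obtain ⟨x₁, hx₁n, hx₁B, hx₁C⟩ := hC₁.2.2 (ε / 2) (by linarith)
      obtain ⟨x₂, hx₂n, hx₂B, hx₂C⟩ := hC₂.2.2 (ε / 2) (by linarith)
      have hb₁ : ∀ m, |x₁ m| ≤ 1 := fun m => le_trans (x₁.norm_coe_le_norm m) hx₁n
      have hb₂ : ∀ m, |x₂ m| ≤ 1 := fun m => le_trans (x₂.norm_coe_le_norm m) hx₂n
      refine ⟨x₁ ⊓ x₂, ?_, ?_, ?_⟩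
      · refine BoundedContinuousFunction.norm_le zero_le_one |>.2 (fun m => ?_)
        have : (x₁ ⊓ x₂) m = min (x₁ m) (x₂ m) := rfl
        rw [Real.norm_eq_abs, this, abs_le]
        constructor
        · exact le_min (abs_le.1 (hb₁ m)).1 (abs_le.1 (hb₂ m)).1
        · exact le_trans (min_le_left _ _) (abs_le.1 (hb₁ m)).2
      · -- `B₁ (x₁ ⊓ x₂) ≥ B₁ x₁ + B₁ x₂ - 1`
        have key : 0 ≤ B₁ (x₁ ⊓ x₂ - x₁ - x₂ + 1) := by
          refine hB₁.1 _ (fun m => ?_)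
          have h1 : (x₁ ⊓ x₂ - x₁ - x₂ + 1) m = min (x₁ m) (x₂ m) - x₁ m - x₂ m + 1 := rfl
          rw [h1]
          rcases le_total (x₁ m) (x₂ m) with h | h
          · rw [min_eq_left h]; linarith [(abs_le.1 (hb₂ m)).2]
          · rw [min_eq_right h]; linarith [(abs_le.1 (hb₁ m)).2]
        rw [map_add, map_sub, map_sub, hB₁.2.1] at key
        linarith
      · have h₁ : C₁ (x₁ ⊓ x₂) ≤ C₁ x₁ := by
          have : 0 ≤ C₁ (x₁ - x₁ ⊓ x₂) := by
            refine hC₁.1 _ (fun m => ?_)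
            have h1 : (x₁ - x₁ ⊓ x₂) m = x₁ m - min (x₁ m) (x₂ m) := rfl
            rw [h1, sub_nonneg]; exact min_le_left _ _
          rw [map_sub, sub_nonneg] at this; exact this
        have h₂ : C₂ (x₁ ⊓ x₂) ≤ C₂ x₂ := by
          have : 0 ≤ C₂ (x₂ - x₁ ⊓ x₂) := by
            refine hC₂.1 _ (fun m => ?_)
            have h1 : (x₂ - x₁ ⊓ x₂) m = x₂ m - min (x₁ m) (x₂ m) := rfl
            rw [h1, sub_nonneg]; exact min_le_right _ _
          rw [map_sub, sub_nonneg] at this; exact this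
        simp only [ContinuousLinearMap.add_apply, ContinuousLinearMap.smul_apply, smul_eq_mul]
        calc a * C₁ (x₁ ⊓ x₂) + b * C₂ (x₁ ⊓ x₂)
            ≤ a * (-1 + ε / 2) + b * (-1 + ε / 2) := by
              exact add_le_add (mul_le_mul_of_nonneg_left (le_trans h₁ hx₁C) ha)
                (mul_le_mul_of_nonneg_left (le_trans h₂ hx₂C) hb)
          _ = -1 + ε / 2 := by ring_nf; nlinarith [hab]
          _ ≤ -1 + ε := by linarith
  -- On `S` the distance to `B₁` is exactly `2`.
  have hdist : ∀ C ∈ S, ‖B₁ - C‖ = 2 := by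
    intro C hC
    obtain ⟨hCpos, hC1, hCP⟩ := hC
    have hCnorm : ‖C‖ ≤ 1 := pos_norm_le_one C hCpos hC1
    refine le_antisymm (le_trans (norm_sub_le B₁ C) (by linarith)) ?_
    by_contra hlt
    push_neg at hlt
    set ε : ℝ := (2 - ‖B₁ - C‖) / 3 with hεdef
    have hε : 0 < ε := by simp only [hεdef]; linarith
    obtain ⟨x, hxn, hxB, hxC⟩ := hCP ε hε
    have h1 : (B₁ - C) x ≤ ‖B₁ - C‖ := by
      calc (B₁ - C) x ≤ |(B₁ - C) x| := le_abs_self _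
        _ ≤ ‖B₁ - C‖ * ‖x‖ := (B₁ - C).le_opNorm x
        _ ≤ ‖B₁ - C‖ * 1 := mul_le_mul_of_nonneg_left hxn (B₁ - C).opNorm_nonneg
        _ = ‖B₁ - C‖ := mul_one _
    rw [ContinuousLinearMap.sub_apply] at h1
    have : (2 : ℝ) - 2 * ε ≤ ‖B₁ - C‖ := by linarith
    simp only [hεdef] at this
    linarith
  -- Conclude: the hull lies in `S`, and the distance function is continuous.
  have hhull : convexHull ℝ (Set.extremePoints ℝ BanachLimits) ⊆ {C | ‖B₁ - C‖ = 2} :=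
    fun C hC => hdist C (convexHull_min hext hconv hC)
  have hB₂' : ∀ ε > 0, ∃ C ∈ convexHull ℝ (Set.extremePoints ℝ BanachLimits), dist B₂ C < ε :=
    Metric.mem_closure_iff.mp hB₂
  by_contra hne
  have habs : 0 < |‖B₁ - B₂‖ - 2| := abs_pos.2 (sub_ne_zero.2 hne)
  obtain ⟨C, hC, hdC⟩ := hB₂' (|‖B₁ - B₂‖ - 2| / 2) (by linarith)
  have h2 : ‖B₁ - C‖ = 2 := hhull hC
  have e1 : B₁ - B₂ = (B₁ - C) + (C - B₂) := by abel
  have e2 : B₁ - C = (B₁ - B₂) + (B₂ - C) := by abel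
  have triangle1 : ‖B₁ - B₂‖ ≤ ‖B₁ - C‖ + ‖C - B₂‖ := by
    rw [e1]; exact norm_add_le (B₁ - C) (C - B₂)
  have triangle2 : ‖B₁ - C‖ ≤ ‖B₁ - B₂‖ + ‖B₂ - C‖ := by
    rw [e2]; exact norm_add_le (B₁ - B₂) (B₂ - C)
  have hrev : ‖C - B₂‖ = ‖B₂ - C‖ := norm_sub_rev C B₂
  have hdC' : ‖B₂ - C‖ < |‖B₁ - B₂‖ - 2| / 2 :=
    lt_of_le_of_lt (dist_eq_norm B₂ C).symm.le hdC
  rw [h2] at triangle1 triangle2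
  rcases abs_cases (‖B₁ - B₂‖ - 2) with ⟨h, _⟩ | ⟨h, _⟩ <;> linarith

end
end

section
/- For every extended limit γ on ℓ∞, the functional B defined by Bx = log(2) · γ( n ↦ (1/n) Σ_{k=0}^∞ x_{k+1} 2^{−k/n} ) for x ∈ ℓ∞ is a Banach limit which is not an extreme point of the set 𝔅 of all Banach limits. Hence the set 𝔅_ζ of all Banach limits of this form is disjoint from ext 𝔅. -/
open Filter BoundedContinuousFunction

noncomputable section

/-- An extended limit: a positive continuous linear functional on `ℓ∞` which agrees with
the limit on every convergent sequence. -/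
def IsExtendedLimit (γ : LInf →L[ℝ] ℝ) : Prop :=
  (∀ x : LInf, (∀ n, 0 ≤ x n) → 0 ≤ γ x) ∧
    ∀ (x : LInf) (a : ℝ), Filter.Tendsto (fun n => x n) Filter.atTop (nhds a) → γ x = a

set_option maxHeartbeats 1600000

section ZetaAux
open Real

namespace ZetaBL

open Real

/-- `ν = n + 1`. -/
def nu (n : ℕ) : ℝ := (n : ℝ) + 1

lemma nu_pos (n : ℕ) : 0 < nu n := by unfold nu; positivity

lemma one_le_nu (n : ℕ) : 1 ≤ nu n := by simp [nu]

/-- the geometric ratio `r = 2^{-1/ν}`. -/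
def rr (n : ℕ) : ℝ := (2 : ℝ) ^ (-(nu n)⁻¹ : ℝ)

lemma rr_pos (n : ℕ) : 0 < rr n := Real.rpow_pos_of_pos two_pos _

lemma rr_lt_one (n : ℕ) : rr n < 1 :=
  Real.rpow_lt_one_of_one_lt_of_neg one_lt_two (by simp [inv_pos.2 (nu_pos n)])

lemma rr_eq_exp (n : ℕ) : rr n = Real.exp (-(Real.log 2 / nu n)) := by
  rw [rr, Real.rpow_def_of_pos two_pos]
  ring_nf

lemma rpow_eq_rr_pow (n k : ℕ) : (2 : ℝ) ^ (-(k : ℝ) / nu n) = rr n ^ k := by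
  have h : (-(k : ℝ) / nu n) = (-(nu n)⁻¹) * (k : ℝ) := by
    field_simp
  rw [h, Real.rpow_mul (by norm_num), Real.rpow_natCast]
  rfl

lemma rr_pow_le_one (n k : ℕ) : rr n ^ k ≤ 1 :=
  pow_le_one₀ (rr_pos n).le (rr_lt_one n).le

lemma rr_pow_pos (n k : ℕ) : 0 < rr n ^ k := pow_pos (rr_pos n) k

/-- weight lower bound on the window `k ≤ 3ν`. -/
lemma rr_pow_ge (n k : ℕ) (h : (k : ℝ) ≤ 3 * nu n) : 1/8 ≤ rr n ^ k := by
  have h1 : (2:ℝ) ^ (-(3:ℝ)) ≤ (2:ℝ) ^ (-(k:ℝ) / nu n) := by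
    apply Real.rpow_le_rpow_of_exponent_le one_le_two
    rw [neg_div, neg_le_neg_iff, div_le_iff₀ (nu_pos n)]
    linarith
  rw [rpow_eq_rr_pow] at h1
  refine le_trans (le_of_eq ?_) h1
  rw [show (-(3:ℝ)) = -((3:ℕ):ℝ) by norm_num, Real.rpow_neg (by norm_num),
    Real.rpow_natCast]
  norm_num

/-- Abel-type sum. -/
def Af (f : ℕ → ℝ) (n : ℕ) : ℝ := ∑' k, f k * rr n ^ k

lemma summable_af {f : ℕ → ℝ} {C : ℝ} (h : ∀ k, |f k| ≤ C) (n : ℕ) :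
    Summable (fun k => f k * rr n ^ k) := by
  apply Summable.of_norm_bounded (g := fun k => C * rr n ^ k)
    (((summable_geometric_of_lt_one (rr_pos n).le (rr_lt_one n))).mul_left C)
  intro k
  rw [norm_mul, norm_pow]
  gcongr
  · exact (abs_nonneg _).trans (h 0)
  · exact h k
  · rw [Real.norm_eq_abs, abs_of_pos (rr_pos n)]

lemma af_one (n : ℕ) : Af (fun _ => 1) n = (1 - rr n)⁻¹ := by
  simp only [Af, one_mul]
  exact tsum_geometric_of_lt_one (rr_pos n).le (rr_lt_one n)

lemma af_nonneg {f : ℕ → ℝ} (h : ∀ k, 0 ≤ f k) (n : ℕ) : 0 ≤ Af f n :=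
  tsum_nonneg fun k => mul_nonneg (h k) (rr_pow_pos n k).le

lemma af_mono {f g : ℕ → ℝ} {C : ℝ} (hf : ∀ k, |f k| ≤ C) (hg : ∀ k, |g k| ≤ C)
    (h : ∀ k, f k ≤ g k) (n : ℕ) : Af f n ≤ Af g n :=
  Summable.tsum_le_tsum (fun k => by
      have := rr_pow_pos n k; nlinarith [h k])
    (summable_af hf n) (summable_af hg n)

-- bounds for 1 - r
lemma one_sub_rr_le (n : ℕ) : 1 - rr n ≤ Real.log 2 / nu n := by
  have := Real.add_one_le_exp (-(Real.log 2 / nu n))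
  rw [rr_eq_exp]; linarith

lemma one_sub_rr_pos (n : ℕ) : 0 < 1 - rr n := by linarith [rr_lt_one n]

lemma one_sub_rr_ge (n : ℕ) :
    (Real.log 2 / nu n) / (1 + Real.log 2 / nu n) ≤ 1 - rr n := by
  set x := Real.log 2 / nu n with hx
  have hx0 : 0 < x := div_pos (Real.log_pos one_lt_two) (nu_pos n)
  have h1 : 1 + x ≤ Real.exp x := by linarith [Real.add_one_le_exp x]
  have h2 : rr n ≤ (1 + x)⁻¹ := by
    rw [rr_eq_exp, Real.exp_neg, ← hx]
    exact inv_anti₀ (by linarith) h1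
  have h3 : (0:ℝ) < 1 + x := by linarith
  rw [div_le_iff₀ h3] at *
  have : (1 + x)⁻¹ * (1 + x) = 1 := inv_mul_cancel₀ (by linarith)
  nlinarith

/-- the normalised `v = log 2 · ν⁻¹ (1-r)⁻¹ ∈ [1, 1 + log2/ν]`. -/
lemma v_ge_one (n : ℕ) : 1 ≤ Real.log 2 * ((nu n)⁻¹ * (1 - rr n)⁻¹) := by
  have h := one_sub_rr_le n
  have h2 := one_sub_rr_pos n
  have h3 := nu_pos n
  have key : Real.log 2 * ((nu n)⁻¹ * (1 - rr n)⁻¹) = (Real.log 2 / nu n) / (1 - rr n) := by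
    field_simp
  rw [key, le_div_iff₀ h2, one_mul]
  exact h

lemma v_le (n : ℕ) :
    Real.log 2 * ((nu n)⁻¹ * (1 - rr n)⁻¹) ≤ 1 + Real.log 2 / nu n := by
  have h := one_sub_rr_ge n
  have h2 := one_sub_rr_pos n
  have h3 := nu_pos n
  set x := Real.log 2 / nu n with hx
  have hx0 : 0 < x := div_pos (Real.log_pos one_lt_two) h3
  have key : Real.log 2 * ((nu n)⁻¹ * (1 - rr n)⁻¹) = x / (1 - rr n) := by
    rw [hx]; field_simp
  rw [key, div_le_iff₀ h2]
  have h4 : (0:ℝ) < 1 + x := by linarith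
  rw [div_le_iff₀ h4] at h
  nlinarith



/-- the slowly log-oscillating multiplier. -/
def mfun (k : ℕ) : ℝ := (1 + Real.cos (2 * π * Real.logb 2 ((k:ℝ) + 1))) / 2

lemma mfun_nonneg (k : ℕ) : 0 ≤ mfun k := by
  have := Real.neg_one_le_cos (2 * π * Real.logb 2 ((k:ℝ) + 1))
  unfold mfun; linarith

lemma mfun_le_one (k : ℕ) : mfun k ≤ 1 := by
  have := Real.cos_le_one (2 * π * Real.logb 2 ((k:ℝ) + 1))
  unfold mfun; linarith

lemma mfun_abs_le (k : ℕ) : |mfun k| ≤ 1 :=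
  abs_le.2 ⟨by linarith [mfun_nonneg k], mfun_le_one k⟩

-- rational vs rpow comparisons
lemma rpow_key {b y : ℝ} {e n : ℕ} (hb : 1 ≤ b) (he : (n:ℝ) * y = (e:ℝ)) :
    (b ^ y) ^ n = b ^ e := by
  rw [← Real.rpow_natCast (b ^ y) n, ← Real.rpow_mul (by linarith), mul_comm y,
    he, Real.rpow_natCast]

lemma le_rpow_of_pow_le {q b y : ℝ} {e n : ℕ} (hq : 0 ≤ q) (hb : 1 ≤ b)
    (hn : n ≠ 0) (he : (n:ℝ) * y = (e:ℝ)) (h : q ^ n ≤ b ^ e) :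
    q ≤ b ^ y := by
  apply le_of_pow_le_pow_left₀ hn (Real.rpow_nonneg (by linarith) _)
  rw [rpow_key hb he]; exact h

lemma rpow_le_of_le_pow {q b y : ℝ} {e n : ℕ} (hq : 0 ≤ q) (hb : 1 ≤ b)
    (hn : n ≠ 0) (he : (n:ℝ) * y = (e:ℝ)) (h : b ^ e ≤ q ^ n) :
    b ^ y ≤ q := by
  apply le_of_pow_le_pow_left₀ hn hq
  rw [rpow_key hb he]; exact h

lemma ten_ninth_le : (10/9 : ℝ) ≤ (2:ℝ) ^ ((1:ℝ)/6) :=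
  le_rpow_of_pow_le (n := 6) (e := 1) (by norm_num) (by norm_num) (by norm_num)
    (by norm_num) (by norm_num)

lemma seven_fifth_ge : (2:ℝ) ^ ((5:ℝ)/12) ≤ (7/5 : ℝ) :=
  rpow_le_of_le_pow (n := 12) (e := 5) (by norm_num) (by norm_num) (by norm_num)
    (by norm_num) (by norm_num)

lemma one49_le : (149/100 : ℝ) ≤ (2:ℝ) ^ ((7:ℝ)/12) :=
  le_rpow_of_pow_le (n := 12) (e := 7) (by norm_num) (by norm_num) (by norm_num)
    (by norm_num) (by norm_num)

/-- phase decomposition: the cosine only sees `logb 2 ((k+1)/2^p)`. -/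
lemma cos_phase (p k : ℕ) (hk : (0:ℝ) < (k:ℝ) + 1) :
    Real.cos (2 * π * Real.logb 2 ((k:ℝ)+1)) =
      Real.cos (2 * π * Real.logb 2 (((k:ℝ)+1) / 2 ^ p)) := by
  have h2 : Real.logb 2 ((k:ℝ)+1) = Real.logb 2 (((k:ℝ)+1) / 2^p) + p := by
    rw [Real.logb_div (by linarith) (by positivity)]
    have : Real.logb 2 ((2:ℝ)^p) = p := by
      rw [← Real.rpow_natCast 2 p, Real.logb_rpow (by norm_num) (by norm_num)]
    rw [this]; ring
  rw [h2, mul_add]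
  have : 2 * π * (p:ℝ) = (p:ℤ) * (2 * π) := by push_cast; ring
  rw [this, Real.cos_add_int_mul_two_pi]

/-- on `[2^p, 2^p·10/9]` (of `k+1`), `mfun ≥ 3/4`. -/
lemma mfun_big (p k : ℕ) (h1 : (2:ℝ)^p ≤ (k:ℝ)+1) (h2 : (k:ℝ)+1 ≤ (2:ℝ)^p * (10/9)) :
    3/4 ≤ mfun k := by
  have hp : (0:ℝ) < 2^p := by positivity
  have hk : (0:ℝ) < (k:ℝ)+1 := lt_of_lt_of_le hp h1
  set q : ℝ := ((k:ℝ)+1) / 2^p with hq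
  have hq1 : 1 ≤ q := (one_le_div hp).2 h1
  have hq2 : q ≤ 10/9 := (div_le_iff₀ hp).2 (by linarith)
  set t : ℝ := Real.logb 2 q with ht
  have ht0 : 0 ≤ t := Real.logb_nonneg one_lt_two hq1
  have ht1 : t ≤ 1/6 := by
    rw [ht]
    rw [Real.logb_le_iff_le_rpow one_lt_two (by linarith)]
    exact le_trans hq2 ten_ninth_le
  have hcos : Real.cos (2 * π * t) ≥ 1/2 := by
    have hπ := Real.pi_pos
    have h3 : 2 * π * t ≤ π / 3 := by nlinarith
    have := Real.cos_le_cos_of_nonneg_of_le_pi (by positivity : (0:ℝ) ≤ 2*π*t)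
      (by linarith [Real.pi_pos] : π/3 ≤ π) h3
    rw [Real.cos_pi_div_three] at this
    linarith
  unfold mfun
  rw [cos_phase p k hk, ← hq, ← ht]
  linarith

/-- on `[2^p·7/5, 2^p·149/100]`, `mfun ≤ 1/4`. -/
lemma mfun_small (p k : ℕ) (h1 : (2:ℝ)^p * (7/5) ≤ (k:ℝ)+1)
    (h2 : (k:ℝ)+1 ≤ (2:ℝ)^p * (149/100)) : mfun k ≤ 1/4 := by
  have hp : (0:ℝ) < 2^p := by positivity
  have hk : (0:ℝ) < (k:ℝ)+1 := lt_of_lt_of_le (by positivity) h1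
  set q : ℝ := ((k:ℝ)+1) / 2^p with hq
  have hq1 : 7/5 ≤ q := (le_div_iff₀ hp).2 (by linarith)
  have hq2 : q ≤ 149/100 := (div_le_iff₀ hp).2 (by linarith)
  set t : ℝ := Real.logb 2 q with ht
  have ht0 : 5/12 ≤ t := by
    rw [ht, Real.le_logb_iff_rpow_le one_lt_two (by linarith)]
    exact le_trans seven_fifth_ge hq1
  have ht1 : t ≤ 7/12 := by
    rw [ht, Real.logb_le_iff_le_rpow one_lt_two (by linarith)]
    exact le_trans hq2 one49_le
  have hπ := Real.pi_pos
  set x : ℝ := 2 * π * t with hx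
  have hcos : Real.cos x ≤ -(1/2) := by
    have h5 : |x - π| ≤ π / 6 := by
      rw [abs_le]; constructor <;> nlinarith
    have h6 : Real.cos (x - π) ≥ 1/2 := by
      have := Real.cos_le_cos_of_nonneg_of_le_pi (abs_nonneg (x - π))
        (by linarith : π/6 ≤ π) h5
      rw [Real.cos_pi_div_six, Real.cos_abs] at this
      have h7 : (1:ℝ) ≤ Real.sqrt 3 := by
        rw [show (1:ℝ) = Real.sqrt 1 by simp]
        exact Real.sqrt_le_sqrt (by norm_num)
      linarith
    rw [Real.cos_sub_pi] at h6
    linarith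
  unfold mfun
  rw [cos_phase p k hk, ← hq, ← ht, ← hx]
  linarith

/-- slow variation. -/
lemma mfun_slow (k : ℕ) : |mfun (k+1) - mfun k| ≤ 6 / ((k:ℝ)+1) := by
  have habs : ∀ a b : ℝ, |Real.cos a - Real.cos b| ≤ |a - b| := by
    intro a b
    rw [Real.cos_sub_cos, abs_mul, abs_mul, abs_neg, abs_two]
    have h1 := Real.abs_sin_le_one ((a+b)/2)
    have h2 : |Real.sin ((a-b)/2)| ≤ |a-b|/2 := by
      have := Real.abs_sin_le_abs (x := (a-b)/2)
      rwa [abs_div, abs_two] at this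
    have h0 : 0 ≤ |Real.sin ((a+b)/2)| := abs_nonneg _
    have h0' : 0 ≤ |Real.sin ((a-b)/2)| := abs_nonneg _
    nlinarith
  have hlog : Real.logb 2 ((k:ℝ)+1+1) - Real.logb 2 ((k:ℝ)+1) ≤ (1/Real.log 2) * (1/((k:ℝ)+1)) := by
    have hk : (0:ℝ) < (k:ℝ)+1 := by positivity
    rw [Real.logb, Real.logb, div_sub_div_same, ← Real.log_div (by linarith) (by linarith)]
    have h1 : ((k:ℝ)+1+1)/((k:ℝ)+1) = 1 + 1/((k:ℝ)+1) := by field_simp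
    have h2 : Real.log (((k:ℝ)+1+1)/((k:ℝ)+1)) ≤ 1/((k:ℝ)+1) := by
      rw [h1]
      have := Real.log_le_sub_one_of_pos (x := 1 + 1/((k:ℝ)+1)) (by positivity)
      linarith
    have hl2 : 0 < Real.log 2 := Real.log_pos one_lt_two
    rw [div_le_iff₀ hl2] at *
    calc Real.log (((k:ℝ)+1+1)/((k:ℝ)+1)) ≤ 1/((k:ℝ)+1) := h2
      _ = 1/Real.log 2 * (1/((k:ℝ)+1)) * Real.log 2 := by field_simp
  have hlog0 : 0 ≤ Real.logb 2 ((k:ℝ)+1+1) - Real.logb 2 ((k:ℝ)+1) := by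
    have : Real.logb 2 ((k:ℝ)+1) ≤ Real.logb 2 ((k:ℝ)+1+1) := by
      apply Real.logb_le_logb_of_le one_lt_two (by positivity) (by linarith)
    linarith
  have hπ4 := Real.pi_le_four
  have hπ := Real.pi_pos
  have hl2 : (0.6931471803:ℝ) < Real.log 2 := Real.log_two_gt_d9
  unfold mfun
  have key := habs (2 * π * Real.logb 2 (((k:ℕ)+1:ℝ)+1)) (2 * π * Real.logb 2 ((k:ℝ)+1))
  have hcast : (((k+1:ℕ)):ℝ) + 1 = ((k:ℝ)+1)+1 := by push_cast; ring
  rw [show (1 + Real.cos (2*π*Real.logb 2 (((k+1:ℕ):ℝ)+1)))/2 -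
      (1 + Real.cos (2*π*Real.logb 2 ((k:ℝ)+1)))/2 =
      (Real.cos (2*π*Real.logb 2 (((k+1:ℕ):ℝ)+1)) -
       Real.cos (2*π*Real.logb 2 ((k:ℝ)+1)))/2 by ring]
  rw [hcast]
  rw [abs_div, abs_two]
  have h8 : |2 * π * Real.logb 2 (((k:ℝ)+1)+1) - 2 * π * Real.logb 2 ((k:ℝ)+1)|
      = 2 * π * (Real.logb 2 (((k:ℝ)+1)+1) - Real.logb 2 ((k:ℝ)+1)) := by
    rw [show 2 * π * Real.logb 2 (((k:ℝ)+1)+1) - 2 * π * Real.logb 2 ((k:ℝ)+1)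
        = 2 * π * (Real.logb 2 (((k:ℝ)+1)+1) - Real.logb 2 ((k:ℝ)+1)) by ring]
    rw [abs_of_nonneg (by positivity)]
  have hk1 : (0:ℝ) < (k:ℝ)+1 := by positivity
  have h9 : 2 * π * (Real.logb 2 (((k:ℝ)+1)+1) - Real.logb 2 ((k:ℝ)+1))
      ≤ 2 * 4 * ((1/0.6931471803) * (1/((k:ℝ)+1))) := by
    have hl : (1:ℝ)/Real.log 2 ≤ 1/0.6931471803 :=
      one_div_le_one_div_of_le (by norm_num) (le_of_lt hl2)
    have h10 : (1/Real.log 2) * (1/((k:ℝ)+1)) ≤ (1/0.6931471803) * (1/((k:ℝ)+1)) :=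
      mul_le_mul_of_nonneg_right hl (by positivity)
    nlinarith [hlog, hlog0, mul_pos (mul_pos two_pos hπ) hk1]
  calc |Real.cos (2*π*Real.logb 2 (((k:ℝ)+1)+1)) - Real.cos (2*π*Real.logb 2 ((k:ℝ)+1))| / 2
      ≤ |2 * π * Real.logb 2 (((k:ℝ)+1)+1) - 2 * π * Real.logb 2 ((k:ℝ)+1)| / 2 := by
        have := habs (2 * π * Real.logb 2 (((k:ℝ)+1)+1)) (2 * π * Real.logb 2 ((k:ℝ)+1))
        linarith
    _ ≤ 6 / ((k:ℝ)+1) := by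
        rw [h8]
        have hx : (1:ℝ)/0.6931471803 ≤ 3/2 := by norm_num
        have hinv : (0:ℝ) ≤ 1/((k:ℝ)+1) := by positivity
        have h11 : 2 * 4 * ((1/0.6931471803) * (1/((k:ℝ)+1))) ≤ 12 * (1/((k:ℝ)+1)) := by
          nlinarith
        have h12 : (12:ℝ) * (1/((k:ℝ)+1)) = 2 * (6/((k:ℝ)+1)) := by ring
        linarith [h9]


lemma cast_div_ge (a b : ℕ) (hb : 0 < b) : ((a/b : ℕ) : ℝ) ≥ ((a:ℝ) - (b-1))/b := by
  have h := Nat.div_add_mod a b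
  have hmod : a % b < b := Nat.mod_lt a hb
  have hcast : (b:ℝ) * ((a/b : ℕ):ℝ) + ((a % b : ℕ):ℝ) = (a:ℝ) := by
    exact_mod_cast congrArg (Nat.cast : ℕ → ℝ) h
  have hb' : (0:ℝ) < b := by exact_mod_cast hb
  have hmod' : ((a % b : ℕ):ℝ) ≤ (b:ℝ) - 1 := by
    have : ((a % b : ℕ):ℝ) < (b:ℝ) := by exact_mod_cast hmod
    have : ((a % b : ℕ):ℝ) ≤ (b:ℝ) - 1 := by
      have h2 : (a % b : ℕ) ≤ b - 1 := Nat.le_pred_of_lt hmod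
      have h3 : ((b - 1 : ℕ):ℝ) = (b:ℝ) - 1 := by
        have : (1:ℕ) ≤ b := hb
        push_cast [Nat.cast_sub this]
        ring
      calc ((a % b : ℕ):ℝ) ≤ ((b - 1:ℕ):ℝ) := by exact_mod_cast h2
        _ = (b:ℝ) - 1 := h3
    exact this
  rw [ge_iff_le, div_le_iff₀ hb']
  nlinarith

lemma window_sum (n : ℕ) (hn : 300 ≤ n) :
    ∃ J K : Finset ℕ, (∀ k ∈ J, 3/4 ≤ mfun k) ∧ (∀ k ∈ K, mfun k ≤ 1/4) ∧
      nu n / 320 ≤ ∑ k ∈ J, rr n ^ k ∧ nu n / 320 ≤ ∑ k ∈ K, rr n ^ k := by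
  set p : ℕ := Nat.log 2 (n+1) + 1 with hp
  set a : ℕ := 2 ^ p with ha
  have han : n + 1 < a := Nat.lt_pow_succ_log_self one_lt_two (n+1)
  have ha2 : a ≤ 2 * (n+1) := by
    rw [ha, hp, pow_succ, mul_comm]
    exact Nat.mul_le_mul_left 2 (Nat.pow_log_le_self 2 (Nat.succ_ne_zero n))
  have hnuA : nu n ≤ (a:ℝ) := by
    have : ((n+1 : ℕ):ℝ) ≤ (a:ℝ) := by exact_mod_cast han.le
    unfold nu; push_cast at this ⊢; linarith
  have hA2nu : (a:ℝ) ≤ 2 * nu n := by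
    have : ((a:ℕ):ℝ) ≤ ((2*(n+1) : ℕ):ℝ) := by exact_mod_cast ha2
    unfold nu; push_cast at this ⊢; linarith
  have hnu300 : (301:ℝ) ≤ nu n := by
    unfold nu
    have : (300:ℝ) ≤ (n:ℝ) := by exact_mod_cast hn
    linarith
  have haR : (301:ℝ) ≤ (a:ℝ) := by linarith
  have hcast2p : ((a:ℕ):ℝ) = (2:ℝ)^p := by rw [ha]; push_cast; norm_num
  -- the J window
  refine ⟨Finset.Icc a ((11*a)/10), Finset.Icc ((7*a)/5) ((29*a)/20), ?_, ?_, ?_, ?_⟩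
  · intro k hk
    rw [Finset.mem_Icc] at hk
    obtain ⟨hk1, hk2⟩ := hk
    apply mfun_big p k
    · rw [← hcast2p]
      have : (a:ℝ) ≤ (k:ℝ) := by exact_mod_cast hk1
      linarith
    · have h1 : ((k:ℕ):ℝ) ≤ ((11*a/10 : ℕ):ℝ) := by exact_mod_cast hk2
      have h2 : ((11*a/10 : ℕ):ℝ) ≤ (11*(a:ℝ))/10 := by
        have := Nat.cast_div_le (α := ℝ) (m := 11*a) (n := 10)
        push_cast at this ⊢
        linarith
      rw [← hcast2p]
      -- k+1 ≤ 11a/10 + 1 ≤ 10a/9 since a ≥ 90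
      have : (11*(a:ℝ))/10 + 1 ≤ (a:ℝ) * (10/9) := by nlinarith
      linarith
  · intro k hk
    rw [Finset.mem_Icc] at hk
    obtain ⟨hk1, hk2⟩ := hk
    apply mfun_small p k
    · have h1 : ((7*a/5 : ℕ):ℝ) ≥ ((7*(a:ℝ)) - 4)/5 := by
        have := cast_div_ge (7*a) 5 (by norm_num)
        push_cast at this ⊢
        linarith
      have h2 : ((7*a/5:ℕ):ℝ) ≤ (k:ℝ) := by exact_mod_cast hk1
      rw [← hcast2p]
      nlinarith
    · have h1 : ((k:ℕ):ℝ) ≤ ((29*a/20 : ℕ):ℝ) := by exact_mod_cast hk2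
      have h2 : ((29*a/20 : ℕ):ℝ) ≤ (29*(a:ℝ))/20 := by
        have := Nat.cast_div_le (α := ℝ) (m := 29*a) (n := 20)
        push_cast at this ⊢
        linarith
      rw [← hcast2p]
      -- k+1 ≤ 29a/20 + 1 ≤ 149a/100 since a ≥ 25
      have : (29*(a:ℝ))/20 + 1 ≤ (a:ℝ) * (149/100) := by nlinarith
      linarith
  · -- J mass
    have hle : a ≤ 11*a/10 := by
      rw [Nat.le_div_iff_mul_le (by norm_num)]
      omega
    have hcard : (((Finset.Icc a (11*a/10)).card : ℕ):ℝ) ≥ nu n / 10 := by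
      rw [Nat.card_Icc]
      have hsub : a ≤ 11*a/10 + 1 := le_trans hle (Nat.le_succ _)
      rw [Nat.cast_sub hsub]
      have h1 : ((11*a/10 : ℕ):ℝ) ≥ (11*(a:ℝ) - 9)/10 := by
        have := cast_div_ge (11*a) 10 (by norm_num)
        push_cast at this ⊢
        linarith
      push_cast
      nlinarith
    have hweight : ∀ k ∈ Finset.Icc a (11*a/10), (1:ℝ)/8 ≤ rr n ^ k := by
      intro k hk
      rw [Finset.mem_Icc] at hk
      apply rr_pow_ge
      have h1 : ((k:ℕ):ℝ) ≤ ((11*a/10 : ℕ):ℝ) := by exact_mod_cast hk.2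
      have h2 : ((11*a/10 : ℕ):ℝ) ≤ (11*(a:ℝ))/10 := by
        have := Nat.cast_div_le (α := ℝ) (m := 11*a) (n := 10)
        push_cast at this ⊢
        linarith
      nlinarith
    have := Finset.card_nsmul_le_sum (Finset.Icc a (11*a/10)) (fun k => rr n ^ k)
      ((1:ℝ)/8) hweight
    rw [nsmul_eq_mul] at this
    have hnn : (0:ℝ) < nu n := nu_pos n
    nlinarith
  · -- K mass
    have hle : 7*a/5 ≤ 29*a/20 := by
      have h1 : 7*a/5 = 28*a/20 := by
        rw [show 28*a = 4*(7*a) by ring, show (20:ℕ) = 4*5 by norm_num,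
          Nat.mul_div_mul_left _ _ (by norm_num)]
      rw [h1]
      exact Nat.div_le_div_right (by omega)
    have hcard : (((Finset.Icc (7*a/5) (29*a/20)).card : ℕ):ℝ) ≥ nu n / 20 := by
      rw [Nat.card_Icc]
      have hsub : 7*a/5 ≤ 29*a/20 + 1 := le_trans hle (Nat.le_succ _)
      rw [Nat.cast_sub hsub]
      have h1 : ((29*a/20 : ℕ):ℝ) ≥ (29*(a:ℝ) - 19)/20 := by
        have := cast_div_ge (29*a) 20 (by norm_num)
        push_cast at this ⊢
        linarith
      have h2 : ((7*a/5 : ℕ):ℝ) ≤ 7*(a:ℝ)/5 := by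
        have := Nat.cast_div_le (α := ℝ) (m := 7*a) (n := 5)
        push_cast at this ⊢
        linarith
      push_cast
      nlinarith
    have hweight : ∀ k ∈ Finset.Icc (7*a/5) (29*a/20), (1:ℝ)/8 ≤ rr n ^ k := by
      intro k hk
      rw [Finset.mem_Icc] at hk
      apply rr_pow_ge
      have h1 : ((k:ℕ):ℝ) ≤ ((29*a/20 : ℕ):ℝ) := by exact_mod_cast hk.2
      have h2 : ((29*a/20 : ℕ):ℝ) ≤ (29*(a:ℝ))/20 := by
        have := Nat.cast_div_le (α := ℝ) (m := 29*a) (n := 20)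
        push_cast at this ⊢
        linarith
      nlinarith
    have := Finset.card_nsmul_le_sum (Finset.Icc (7*a/5) (29*a/20)) (fun k => rr n ^ k)
      ((1:ℝ)/8) hweight
    rw [nsmul_eq_mul] at this
    have hnn : (0:ℝ) < nu n := nu_pos n
    nlinarith

lemma af_pos_one (n : ℕ) : 0 < Af (fun _ => 1) n := by
  rw [af_one]
  exact inv_pos.2 (one_sub_rr_pos n)

lemma gapA (n : ℕ) (hn : 300 ≤ n) :
    (nu n)^2 / 1638400 ≤
      Af (fun _ => 1) n * Af (fun k => mfun k * mfun k) n - (Af mfun n)^2 := by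
  obtain ⟨J, K, hJ, hK, hJs, hKs⟩ := window_sum n hn
  set A0 := Af (fun _ => 1) n with hA0
  set A1 := Af mfun n with hA1
  set A2 := Af (fun k => mfun k * mfun k) n with hA2
  have s0 : Summable (fun k => (1:ℝ) * rr n ^ k) :=
    summable_af (C := 1) (fun k => by norm_num) n
  have s1 : Summable (fun k => mfun k * rr n ^ k) :=
    summable_af (C := 1) mfun_abs_le n
  have s2 : Summable (fun k => (mfun k * mfun k) * rr n ^ k) :=
    summable_af (C := 1) (fun k => by
      rw [abs_mul]
      exact mul_le_one₀ (mfun_abs_le k) (abs_nonneg _) (mfun_abs_le k)) n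
  have hA0pos : 0 < A0 := af_pos_one n
  have hA1nonneg : 0 ≤ A1 := af_nonneg mfun_nonneg n
  have hA1le : A1 ≤ A0 := af_mono (C := 1) mfun_abs_le (fun k => by norm_num)
    mfun_le_one n
  set cb := A1 / A0 with hcb
  have hc0 : 0 ≤ cb := div_nonneg hA1nonneg hA0pos.le
  have hc1 : cb ≤ 1 := (div_le_one hA0pos).2 hA1le
  have hca : cb * A0 = A1 := div_mul_cancel₀ A1 hA0pos.ne'
  set T := ∑' k, (mfun k - cb)^2 * rr n ^ k with hTdef
  have hsqb : ∀ k, |(mfun k - cb)^2| ≤ 1 := by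
    intro k
    rw [abs_of_nonneg (sq_nonneg _)]
    have h1 := mfun_nonneg k
    have h2 := mfun_le_one k
    nlinarith
  have sT : Summable (fun k => (mfun k - cb)^2 * rr n ^ k) :=
    summable_af (C := 1) hsqb n
  have hTnonneg : 0 ≤ T :=
    tsum_nonneg fun k => mul_nonneg (sq_nonneg _) (rr_pow_pos n k).le
  -- variance identity
  have hT : T = A2 - 2*cb*A1 + cb^2*A0 := by
    have e : (fun k => (mfun k - cb)^2 * rr n ^ k) =
        (fun k => ((mfun k * mfun k) * rr n ^ k - (2*cb) * (mfun k * rr n ^ k)) +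
          (cb^2) * ((1:ℝ) * rr n ^ k)) := by
      funext k; ring
    rw [hTdef, e, Summable.tsum_add (s2.sub (s1.mul_left (2*cb))) (s0.mul_left (cb^2)),
      Summable.tsum_sub s2 (s1.mul_left (2*cb)), tsum_mul_left, tsum_mul_left]
    rw [hA2, hA1, hA0]
    unfold Af
    ring
  have hprod : A0 * T = A0 * A2 - A1^2 := by
    calc A0 * T = A0*A2 - 2*(cb*A0)*A1 + (cb*A0)*(cb*A0) := by rw [hT]; ring
      _ = A0 * A2 - A1^2 := by rw [hca]; ring
  -- lower bound for T
  have hTlow : nu n / 5120 ≤ T := by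
    rcases le_or_gt cb (1/2) with hc | hc
    · have hterm : ∀ k ∈ J, (1/16 : ℝ) * rr n ^ k ≤ (mfun k - cb)^2 * rr n ^ k := by
        intro k hk
        have h1 := hJ k hk
        have h2 : (1/16 : ℝ) ≤ (mfun k - cb)^2 := by nlinarith
        exact mul_le_mul_of_nonneg_right h2 (rr_pow_pos n k).le
      have h3 : ∑ k ∈ J, (1/16 : ℝ) * rr n ^ k ≤ ∑ k ∈ J, (mfun k - cb)^2 * rr n ^ k :=
        Finset.sum_le_sum hterm
      have h4 : ∑ k ∈ J, (mfun k - cb)^2 * rr n ^ k ≤ T :=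
        Summable.sum_le_tsum J (fun k _ => mul_nonneg (sq_nonneg _) (rr_pow_pos n k).le) sT
      have h5 : ∑ k ∈ J, (1/16 : ℝ) * rr n ^ k = (1/16) * ∑ k ∈ J, rr n ^ k := by
        rw [Finset.mul_sum]
      nlinarith
    · have hterm : ∀ k ∈ K, (1/16 : ℝ) * rr n ^ k ≤ (mfun k - cb)^2 * rr n ^ k := by
        intro k hk
        have h1 := hK k hk
        have h2 : (1/16 : ℝ) ≤ (mfun k - cb)^2 := by nlinarith [mfun_nonneg k]
        exact mul_le_mul_of_nonneg_right h2 (rr_pow_pos n k).le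
      have h3 : ∑ k ∈ K, (1/16 : ℝ) * rr n ^ k ≤ ∑ k ∈ K, (mfun k - cb)^2 * rr n ^ k :=
        Finset.sum_le_sum hterm
      have h4 : ∑ k ∈ K, (mfun k - cb)^2 * rr n ^ k ≤ T :=
        Summable.sum_le_tsum K (fun k _ => mul_nonneg (sq_nonneg _) (rr_pow_pos n k).le) sT
      have h5 : ∑ k ∈ K, (1/16 : ℝ) * rr n ^ k = (1/16) * ∑ k ∈ K, rr n ^ k := by
        rw [Finset.mul_sum]
      nlinarith
  -- lower bound for A0
  have hA0low : nu n / 320 ≤ A0 := by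
    have h4 : ∑ k ∈ J, (1:ℝ) * rr n ^ k ≤ A0 :=
      Summable.sum_le_tsum J (fun k _ => mul_nonneg zero_le_one (rr_pow_pos n k).le) s0
    have h5 : ∑ k ∈ J, (1:ℝ) * rr n ^ k = ∑ k ∈ J, rr n ^ k := by
      simp
    linarith
  have hnn : 0 < nu n := nu_pos n
  calc (nu n)^2 / 1638400 = (nu n/320) * (nu n/5120) := by ring
    _ ≤ A0 * T := by
        apply mul_le_mul hA0low hTlow (by positivity) hA0pos.le
    _ = A0 * A2 - A1^2 := hprod

lemma tendsto_inv_nu : Tendsto (fun n : ℕ => (nu n)⁻¹) atTop (nhds 0) := by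
  have h := tendsto_one_div_add_atTop_nhds_zero_nat (𝕜 := ℝ)
  convert h using 2 with n
  rw [one_div]
  rfl

lemma tendsto_v :
    Tendsto (fun n => Real.log 2 * ((nu n)⁻¹ * (1 - rr n)⁻¹)) atTop (nhds 1) := by
  apply tendsto_of_tendsto_of_tendsto_of_le_of_le (g := fun _ : ℕ => (1:ℝ))
    (h := fun n : ℕ => 1 + Real.log 2 * (nu n)⁻¹)
  · exact tendsto_const_nhds
  · have h2 : Tendsto (fun n : ℕ => Real.log 2 * (nu n)⁻¹) atTop (nhds 0) := by
      simpa using tendsto_inv_nu.const_mul (Real.log 2)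
    have := h2.const_add (1:ℝ)
    simpa using this
  · exact fun n => v_ge_one n
  · intro n
    have := v_le n
    rw [div_eq_mul_inv] at this
    exact this

lemma nu_inv_mul_le_three (n : ℕ) : (nu n)⁻¹ * (1 - rr n)⁻¹ ≤ 3 := by
  have h1 := v_le n
  have hc : (0.6931471803:ℝ) < Real.log 2 := Real.log_two_gt_d9
  have hc2 : Real.log 2 < 0.6931471808 := Real.log_two_lt_d9
  have hnu := nu_pos n
  have h2 : Real.log 2 / nu n ≤ Real.log 2 := by
    rw [div_le_iff₀ hnu]
    nlinarith [one_le_nu n]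
  have h3 : Real.log 2 * ((nu n)⁻¹ * (1 - rr n)⁻¹) ≤ 2 := by nlinarith
  have h4 : 0 < (nu n)⁻¹ * (1 - rr n)⁻¹ :=
    mul_pos (inv_pos.2 hnu) (inv_pos.2 (one_sub_rr_pos n))
  nlinarith

lemma main_gap (n : ℕ) (hn : 40000000 ≤ n) :
    (Real.log 2 * ((nu n)⁻¹ * Af mfun n))^2 + 1/7000000 ≤
      Real.log 2 * ((nu n)⁻¹ * Af (fun k => mfun k * mfun k) n) := by
  have hgap := gapA n (by omega)
  set c := Real.log 2 with hcdef
  have hc : (0.6931471803:ℝ) < c := Real.log_two_gt_d9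
  have hc2 : c < 0.6931471808 := Real.log_two_lt_d9
  have hnu : 0 < nu n := nu_pos n
  have hnularge : (40000001:ℝ) ≤ nu n := by
    unfold nu
    have : (40000000:ℝ) ≤ (n:ℝ) := by exact_mod_cast hn
    linarith
  set A0 := Af (fun _ => 1) n with hA0
  set A1 := Af mfun n with hA1
  set A2 := Af (fun k => mfun k * mfun k) n with hA2
  set y := c * ((nu n)⁻¹ * A1) with hy
  set u := c * ((nu n)⁻¹ * A2) with hu
  set v := c * ((nu n)⁻¹ * A0) with hv
  have hvv : v = c * ((nu n)⁻¹ * (1 - rr n)⁻¹) := by rw [hv, hA0, af_one]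
  have hv1 : 1 ≤ v := by rw [hvv]; exact v_ge_one n
  have hv2 : v ≤ 1 + c / nu n := by rw [hvv]; exact v_le n
  have hc1 : c ≤ 1 := by linarith
  have hcnu : c / nu n ≤ 1 / 40000001 := by
    rw [div_le_div_iff₀ hnu (by norm_num)]
    nlinarith
  have hv2' : v ≤ 1 + 1/40000001 := by linarith
  have hA2nonneg : 0 ≤ A2 :=
    af_nonneg (fun k => mul_nonneg (mfun_nonneg k) (mfun_nonneg k)) n
  have hA1nonneg : 0 ≤ A1 := af_nonneg mfun_nonneg n
  have hA1leA0 : A1 ≤ A0 := af_mono (C := 1) mfun_abs_le (fun k => by norm_num)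
    mfun_le_one n
  have hu0 : 0 ≤ u := by
    rw [hu]; positivity
  have hy0 : 0 ≤ y := by rw [hy]; positivity
  have hyv : y ≤ v := by
    rw [hy, hv]
    have : (nu n)⁻¹ * A1 ≤ (nu n)⁻¹ * A0 :=
      mul_le_mul_of_nonneg_left hA1leA0 (inv_pos.2 hnu).le
    nlinarith
  -- key: v*u ≥ y^2 + c^2/1638400
  have hkey : y^2 + 1/3500000 ≤ v * u := by
    have e : v * u - y^2 = c^2 * ((nu n)⁻¹)^2 * (A0 * A2 - A1^2) := by
      rw [hv, hu, hy]; ring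
    have h2 : c^2 * ((nu n)⁻¹)^2 * ((nu n)^2/1638400) ≤ c^2 * ((nu n)⁻¹)^2 * (A0*A2 - A1^2) := by
      apply mul_le_mul_of_nonneg_left hgap (by positivity)
    have h3 : c^2 * ((nu n)⁻¹)^2 * ((nu n)^2/1638400) = c^2/1638400 := by
      field_simp
    have hcsq : (0.6931471803:ℝ)^2 ≤ c^2 := by nlinarith
    have h40 : (1:ℝ)/3500000 ≤ (0.6931471803:ℝ)^2/1638400 := by norm_num
    have h5 : (0.6931471803:ℝ)^2/1638400 ≤ c^2/1638400 := by linarith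
    linarith
  -- now u ≥ (y^2 + d)(2 - v) ≥ y^2 + d - (v-1)*(y^2+d)
  have hfact : 0 ≤ u * (1 - v)^2 := mul_nonneg hu0 (sq_nonneg _)
  have h2v : (0:ℝ) ≤ 2 - v := by linarith
  have huge : (y^2 + 1/3500000) * (2 - v) ≤ u := by
    have hstep1 : (y^2 + 1/3500000) * (2 - v) ≤ (v * u) * (2 - v) :=
      mul_le_mul_of_nonneg_right hkey h2v
    have e2 : u - v * u * (2 - v) = u * (1 - v)^2 := by ring
    linarith
  have hy2 : y ≤ 2 := by linarith
  have hyb : y^2 ≤ 4 := by nlinarith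
  have hexp : (y^2 + 1/3500000) * (2 - v)
      = y^2 + 1/3500000 - (v - 1) * (y^2 + 1/3500000) := by ring
  have hstep : y^2 + 1/3500000 - (v - 1) * (y^2 + 1/3500000) ≤ u := by linarith
  have hvm1 : v - 1 ≤ 1/40000001 := by linarith
  have hvm0 : 0 ≤ v - 1 := by linarith
  have hsb : y^2 + 1/3500000 ≤ 5 := by nlinarith
  have hlast : (v-1) * (y^2 + 1/3500000) ≤ (1/40000001) * 5 :=
    mul_le_mul hvm1 hsb (by positivity) (by norm_num)
  have hfin : y^2 + 1/3500000 - (1/40000001) * 5 ≤ u := by linarith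
  have hnum : (1:ℝ)/7000000 ≤ 1/3500000 - (1/40000001) * 5 := by norm_num
  linarith

end ZetaBL

end ZetaAux

open ZetaBL

/-- For every extended limit `γ`, the functional
`Bx = log 2 · γ(n ↦ (1/n) ∑_{k≥0} x_{k+1} 2^{-k/n})` is a Banach limit which is not an
extreme point of the set of all Banach limits.  Here `Z x ∈ ℓ∞` is the (bounded) sequence
`n ↦ (1/n) ∑_{k≥0} x_{k+1} 2^{-k/n}` (0-indexed: the entry at index `n` corresponds to
`n + 1`, and `x_{k+1}` is `x k`). -/
theorem zeta_banach_limit_not_extreme (γ : LInf →L[ℝ] ℝ) (hγ : IsExtendedLimit γ)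
    (Z : LInf → LInf)
    (hZ : ∀ (x : LInf) (n : ℕ),
      Z x n = (((n : ℝ) + 1))⁻¹ * ∑' k : ℕ, x k * (2 : ℝ) ^ (-(k : ℝ) / ((n : ℝ) + 1)))
    (B : LInf →L[ℝ] ℝ) (hB : ∀ x : LInf, B x = Real.log 2 * γ (Z x)) :
    IsBanachLimit B ∧ B ∉ Set.extremePoints ℝ BanachLimits := by
  classical
  obtain ⟨hγpos, hγlim⟩ := hγ
  have hcpos : 0 < Real.log 2 := Real.log_pos one_lt_two
  have hcd : (0.6931471803:ℝ) < Real.log 2 := Real.log_two_gt_d9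
  have hcd2 : Real.log 2 < 0.6931471808 := Real.log_two_lt_d9
  -- absolute value bound for coordinates
  have habs : ∀ (x : LInf) (k : ℕ), |x k| ≤ ‖x‖ := by
    intro x k
    have := x.norm_coe_le_norm k
    rwa [Real.norm_eq_abs] at this
  have hsumx : ∀ (x : LInf) (n : ℕ), Summable (fun k => x k * rr n ^ k) :=
    fun x n => summable_af (C := ‖x‖) (habs x) n
  -- rewrite Z through Af
  have hzA : ∀ (x : LInf) (n : ℕ), Z x n = (nu n)⁻¹ * Af (fun k => x k) n := by
    intro x n
    rw [hZ]
    unfold Af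
    have h1 : ((n:ℝ) + 1)⁻¹ = (nu n)⁻¹ := rfl
    rw [h1]
    congr 1
    apply tsum_congr
    intro k
    rw [show (-(k : ℝ) / ((n : ℝ) + 1)) = (-(k : ℝ) / nu n) from rfl, rpow_eq_rr_pow]
  -- positivity of B
  have hBpos : ∀ x : LInf, (∀ n, 0 ≤ x n) → 0 ≤ B x := by
    intro x hx
    rw [hB]
    apply mul_nonneg hcpos.le
    apply hγpos
    intro n
    rw [hzA]
    exact mul_nonneg (inv_nonneg.2 (nu_pos n).le) (af_nonneg hx n)
  -- Z maps null sequences to null sequences, so B kills them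
  have hZnull : ∀ y : LInf, Tendsto (fun n => y n) atTop (nhds 0) →
      Tendsto (fun n => Z y n) atTop (nhds 0) := by
    intro y hy
    rw [Metric.tendsto_atTop] at hy ⊢
    intro ε hε
    obtain ⟨K, hK⟩ := hy (ε/6) (by linarith)
    obtain ⟨N, hN⟩ := exists_nat_gt (2 * ((K : ℝ) * ‖y‖) / ε)
    refine ⟨N, fun n hn => ?_⟩
    rw [Real.dist_eq, sub_zero]
    have hnu := nu_pos n
    -- head/tail split
    have hsummabs : Summable (fun k => |y k| * rr n ^ k) :=
      summable_af (C := ‖y‖) (fun k => by rw [abs_abs]; exact habs y k) n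
    have htsumabs : |Af (fun k => y k) n| ≤ ∑' k, |y k| * rr n ^ k := by
      unfold Af
      have := norm_tsum_le_tsum_norm (f := fun k => y k * rr n ^ k)
        (by
          apply hsummabs.congr
          intro k
          rw [Real.norm_eq_abs, abs_mul, abs_of_pos (rr_pow_pos n k)])
      rw [Real.norm_eq_abs] at this
      refine le_trans this (le_of_eq (tsum_congr fun k => ?_))
      rw [Real.norm_eq_abs, abs_mul, abs_of_pos (rr_pow_pos n k)]
    have hsplit : ∑' k, |y k| * rr n ^ k =
        (∑ i ∈ Finset.range K, |y i| * rr n ^ i) + ∑' i, |y (i + K)| * rr n ^ (i + K) :=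
      (Summable.sum_add_tsum_nat_add K hsummabs).symm
    have hhead : ∑ i ∈ Finset.range K, |y i| * rr n ^ i ≤ (K : ℝ) * ‖y‖ := by
      calc ∑ i ∈ Finset.range K, |y i| * rr n ^ i ≤ ∑ i ∈ Finset.range K, ‖y‖ := by
            apply Finset.sum_le_sum
            intro i _
            calc |y i| * rr n ^ i ≤ ‖y‖ * 1 := by
                  apply mul_le_mul (habs y i) (rr_pow_le_one n i) (rr_pow_pos n i).le
                    (norm_nonneg y)
              _ = ‖y‖ := mul_one _
        _ = (K:ℝ) * ‖y‖ := by rw [Finset.sum_const, Finset.card_range, nsmul_eq_mul]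
    have htail : ∑' i, |y (i + K)| * rr n ^ (i + K) ≤ (ε/6) * (1 - rr n)⁻¹ := by
      have h1 : ∀ i : ℕ, |y (i + K)| * rr n ^ (i + K) ≤ (ε/6) * rr n ^ i := by
        intro i
        have h2 : |y (i + K)| ≤ ε/6 := by
          have := hK (i + K) (Nat.le_add_left K i)
          rw [Real.dist_eq, sub_zero] at this
          linarith
        have h3 : rr n ^ (i + K) ≤ rr n ^ i := by
          exact pow_le_pow_of_le_one (rr_pos n).le (rr_lt_one n).le (by omega)
        have := mul_le_mul h2 h3 (rr_pow_pos n _).le (by linarith)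
        linarith [this]
      calc ∑' i, |y (i + K)| * rr n ^ (i + K) ≤ ∑' i, (ε/6) * rr n ^ i := by
            apply Summable.tsum_le_tsum h1
            · exact hsummabs.comp_injective (add_left_injective K)
            · exact (summable_geometric_of_lt_one (rr_pos n).le (rr_lt_one n)).mul_left _
        _ = (ε/6) * (1 - rr n)⁻¹ := by
            rw [tsum_mul_left, tsum_geometric_of_lt_one (rr_pos n).le (rr_lt_one n)]
    have hZbound : |Z y n| ≤ (nu n)⁻¹ * ((K:ℝ) * ‖y‖) + (ε/6) * ((nu n)⁻¹ * (1 - rr n)⁻¹) := by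
      rw [hzA]
      have h0 : (0:ℝ) ≤ (nu n)⁻¹ := (inv_pos.2 hnu).le
      rw [abs_mul, abs_of_nonneg h0]
      have : |Af (fun k => y k) n| ≤ (K:ℝ) * ‖y‖ + (ε/6) * (1 - rr n)⁻¹ := by
        rw [hsplit] at htsumabs
        linarith
      nlinarith [mul_le_mul_of_nonneg_left this h0]
    have h3 := nu_inv_mul_le_three n
    have hτ : (ε/6) * ((nu n)⁻¹ * (1 - rr n)⁻¹) ≤ ε/2 := by
      have h4 : (0:ℝ) < (nu n)⁻¹ * (1 - rr n)⁻¹ :=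
        mul_pos (inv_pos.2 hnu) (inv_pos.2 (one_sub_rr_pos n))
      nlinarith
    have hhd : (nu n)⁻¹ * ((K:ℝ) * ‖y‖) < ε/2 := by
      have h5 : (N:ℝ) < nu n := by
        unfold nu
        have : (N:ℝ) ≤ (n:ℝ) := by exact_mod_cast hn
        linarith
      have h6 : 2 * ((K : ℝ) * ‖y‖) / ε < nu n := by linarith
      have h7 : 2 * ((K:ℝ) * ‖y‖) < ε * nu n := by
        rw [div_lt_iff₀ hε] at h6
        linarith [h6]
      have h9 : (nu n)⁻¹ * (2*((K:ℝ)*‖y‖)) < (nu n)⁻¹ * (ε * nu n) :=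
        mul_lt_mul_of_pos_left h7 (inv_pos.2 hnu)
      have h10 : (nu n)⁻¹ * (ε * nu n) = ε := by field_simp
      have h11 : (nu n)⁻¹ * (2*((K:ℝ)*‖y‖)) = 2*((nu n)⁻¹ * ((K:ℝ)*‖y‖)) := by ring
      linarith
    calc |Z y n| ≤ (nu n)⁻¹ * ((K:ℝ) * ‖y‖) + (ε/6) * ((nu n)⁻¹ * (1 - rr n)⁻¹) := hZbound
      _ < ε/2 + ε/2 := by linarith
      _ = ε := by ring
  have hBnull : ∀ y : LInf, Tendsto (fun n => y n) atTop (nhds 0) → B y = 0 := by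
    intro y hy
    rw [hB, hγlim (Z y) 0 (hZnull y hy), mul_zero]
  -- B 1 = 1
  have hB1 : B 1 = 1 := by
    rw [hB]
    have hlim : Tendsto (fun n => Z (1 : LInf) n) atTop (nhds (Real.log 2)⁻¹) := by
      have he : (fun n => Z (1 : LInf) n) =
          fun n => (Real.log 2)⁻¹ * (Real.log 2 * ((nu n)⁻¹ * (1 - rr n)⁻¹)) := by
        funext n
        rw [hzA]
        have h1 : Af (fun k => (1 : LInf) k) n = (1 - rr n)⁻¹ := by
          rw [show (fun k => (1:LInf) k) = fun _ => (1:ℝ) by funext k; simp]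
          exact af_one n
        rw [h1]
        field_simp
      rw [he]
      have := tendsto_v.const_mul (Real.log 2)⁻¹
      simpa using this
    rw [hγlim _ _ hlim, mul_inv_cancel₀ hcpos.ne']
  -- shift invariance
  have hshiftcoe : ∀ (x : LInf) (k : ℕ), shift x k = if k = 0 then 0 else x (k - 1) := by
    intro x k; rfl
  have hZshift : ∀ (x : LInf) (n : ℕ), Z (shift x) n = rr n * Z x n := by
    intro x n
    rw [hzA, hzA]
    have h1 : Af (fun k => shift x k) n = rr n * Af (fun k => x k) n := by
      unfold Af
      rw [Summable.tsum_eq_zero_add (hsumx (shift x) n)]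
      have h2 : shift x 0 = 0 := by rw [hshiftcoe]; simp
      have h3 : ∀ k : ℕ, shift x (k + 1) * rr n ^ (k + 1) = rr n * (x k * rr n ^ k) := by
        intro k
        rw [hshiftcoe]
        simp only [Nat.add_sub_cancel, Nat.succ_ne_zero, if_false]
        ring
      rw [h2, tsum_congr h3, tsum_mul_left]
      ring
    rw [h1]
    ring
  have hBshift : ∀ x : LInf, B (shift x) = B x := by
    intro x
    have hdiff : Tendsto (fun n => (Z (shift x) - Z x) n) atTop (nhds 0) := by
      apply squeeze_zero_norm (a := fun n => Real.log 2 * (nu n)⁻¹ * ‖Z x‖)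
      · intro n
        have h1 : (Z (shift x) - Z x) n = (rr n - 1) * Z x n := by
          simp only [BoundedContinuousFunction.coe_sub, Pi.sub_apply]
          rw [hZshift]
          ring
        rw [h1, norm_mul]
        have h2 : ‖rr n - 1‖ ≤ Real.log 2 * (nu n)⁻¹ := by
          rw [Real.norm_eq_abs, abs_of_nonpos (by linarith [rr_lt_one n])]
          have := one_sub_rr_le n
          rw [div_eq_mul_inv] at this
          linarith
        have h3 : ‖Z x n‖ ≤ ‖Z x‖ := (Z x).norm_coe_le_norm n
        have h4 : (0:ℝ) ≤ ‖rr n - 1‖ := norm_nonneg _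
        nlinarith [norm_nonneg (Z x), mul_pos hcpos (inv_pos.2 (nu_pos n))]
      · have h5 : Tendsto (fun n : ℕ => Real.log 2 * (nu n)⁻¹) atTop (nhds 0) := by
          simpa using tendsto_inv_nu.const_mul (Real.log 2)
        simpa using h5.mul_const ‖Z x‖
    have h6 : γ (Z (shift x) - Z x) = 0 := hγlim _ 0 hdiff
    rw [map_sub] at h6
    rw [hB, hB]
    have : γ (Z (shift x)) = γ (Z x) := by linarith
    rw [this]
  have hBL : IsBanachLimit B := ⟨hBpos, hB1, hBshift⟩
  refine ⟨hBL, ?_⟩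
  -- ################ non-extremality ################
  -- γ(1) = 1
  have hγ1 : γ (1 : LInf) = 1 := by
    apply hγlim
    have h : (fun n => (1:LInf) n) = fun _ => (1:ℝ) := by funext n; simp
    rw [h]; exact tendsto_const_nhds
  -- eventual positivity for γ
  have hγev : ∀ (h : LInf) (N : ℕ), (∀ n, N ≤ n → 0 ≤ h n) → 0 ≤ γ h := by
    intro h N hN
    set h2 : LInf := BoundedContinuousFunction.ofNormedAddCommGroup
      (fun n => if n < N then h n else 0) continuous_of_discreteTopology ‖h‖
      (by
        intro n
        by_cases hc : n < N
        · simp only [hc, if_true]; exact h.norm_coe_le_norm n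
        · simp only [hc, if_false, norm_zero]; exact norm_nonneg h) with hh2
    have h2coe : ∀ n, h2 n = if n < N then h n else 0 := fun n => rfl
    have hγh2 : γ h2 = 0 := by
      apply hγlim
      apply Tendsto.congr' _ tendsto_const_nhds
      filter_upwards [eventually_ge_atTop N] with n hn
      rw [h2coe]
      simp [Nat.not_lt.2 hn]
    have hpos2 : 0 ≤ γ (h - h2) := by
      apply hγpos
      intro n
      simp only [BoundedContinuousFunction.coe_sub, Pi.sub_apply]
      rw [h2coe]
      by_cases hc : n < N
      · simp [hc]
      · simp only [hc, if_false, sub_zero]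
        exact hN n (Nat.not_lt.1 hc)
    rw [map_sub, hγh2, sub_zero] at hpos2
    exact hpos2
  -- Cauchy–Schwarz for γ
  have hγCS : ∀ Y : LInf, (γ Y)^2 ≤ γ (Y * Y) := by
    intro Y
    set s := γ Y with hs
    have hsq : 0 ≤ γ ((Y - s • 1) * (Y - s • 1)) := by
      apply hγpos
      intro n
      simp only [BoundedContinuousFunction.coe_mul, Pi.mul_apply]
      exact mul_self_nonneg _
    have hexp : (Y - s • 1) * (Y - s • 1) = Y * Y - (2*s) • Y + (s^2) • 1 := by
      ext n
      simp only [BoundedContinuousFunction.coe_add, BoundedContinuousFunction.coe_sub,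
        BoundedContinuousFunction.coe_mul, BoundedContinuousFunction.coe_smul,
        BoundedContinuousFunction.coe_one, Pi.add_apply, Pi.sub_apply, Pi.mul_apply,
        Pi.smul_apply, Pi.one_apply, smul_eq_mul]
      ring
    rw [hexp, map_add, map_sub, map_smul, map_smul, smul_eq_mul, smul_eq_mul, hγ1] at hsq
    nlinarith [hsq]
  -- the multiplier m and its shift
  set m : LInf := BoundedContinuousFunction.ofNormedAddCommGroup mfun
    continuous_of_discreteTopology 1
    (fun k => by rw [Real.norm_eq_abs]; exact mfun_abs_le k) with hm
  have hmcoe : ∀ k, m k = mfun k := fun k => rfl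
  set σm : LInf := BoundedContinuousFunction.ofNormedAddCommGroup (fun k => mfun (k+1))
    continuous_of_discreteTopology 1
    (fun k => by rw [Real.norm_eq_abs]; exact mfun_abs_le (k+1)) with hσm
  have hσcoe : ∀ k, σm k = mfun (k+1) := fun k => rfl
  have hmm : ∀ k, (m * m) k = mfun k * mfun k := by
    intro k
    simp only [BoundedContinuousFunction.coe_mul, Pi.mul_apply]
    rw [hmcoe]
  -- the key strict inequality
  have hBmm : (B m)^2 + 1/7000000 ≤ B (m * m) := by
    set Y : LInf := Real.log 2 • Z m with hY
    set U : LInf := Real.log 2 • Z (m * m) with hU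
    have hγY : γ Y = B m := by rw [hY, map_smul, smul_eq_mul, hB]
    have hγU : γ U = B (m * m) := by rw [hU, map_smul, smul_eq_mul, hB]
    have hfun1 : (fun k => m k) = mfun := funext hmcoe
    have hfun2 : (fun k => (m*m) k) = fun k => mfun k * mfun k := funext hmm
    have hev : ∀ n, 40000000 ≤ n → 0 ≤ (U - Y * Y - (1/7000000 : ℝ) • 1) n := by
      intro n hn
      have hg := main_gap n hn
      have h1 : Z m n = (nu n)⁻¹ * Af mfun n := by rw [hzA, hfun1]
      have h2 : Z (m*m) n = (nu n)⁻¹ * Af (fun k => mfun k * mfun k) n := by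
        rw [hzA, hfun2]
      simp only [hU, hY, BoundedContinuousFunction.coe_sub,
        BoundedContinuousFunction.coe_mul, BoundedContinuousFunction.coe_smul,
        BoundedContinuousFunction.coe_one, Pi.sub_apply, Pi.mul_apply,
        Pi.smul_apply, Pi.one_apply, smul_eq_mul]
      rw [h1, h2]
      nlinarith [hg]
    have hγgap : 0 ≤ γ (U - Y*Y - (1/7000000:ℝ) • 1) := hγev _ 40000000 hev
    have hδ1 : γ ((1/7000000:ℝ) • (1:LInf)) = 1/7000000 := by
      rw [map_smul, smul_eq_mul, hγ1, mul_one]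
    rw [map_sub, map_sub, hδ1, hγU] at hγgap
    have hCS := hγCS Y
    rw [hγY] at hCS
    linarith
  -- positivity facts about m
  have hm0 : ∀ k, 0 ≤ m k := fun k => by rw [hmcoe]; exact mfun_nonneg k
  have hm1 : ∀ k, m k ≤ 1 := fun k => by rw [hmcoe]; exact mfun_le_one k
  set t := B m with ht
  have htnonneg : 0 ≤ t := hBpos m hm0
  have hBmmle : B (m*m) ≤ t := by
    have h := hBpos (m - m*m) (fun k => by
      simp only [BoundedContinuousFunction.coe_sub, Pi.sub_apply]
      rw [hmm, hmcoe]
      nlinarith [mfun_nonneg k, mfun_le_one k])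
    rw [map_sub] at h
    linarith
  have hδ : (0:ℝ) < 1/7000000 := by norm_num
  have ht0 : 0 < t := by nlinarith [hBmm, hBmmle, sq_nonneg t]
  have ht1 : t < 1 := by nlinarith [hBmm, hBmmle]
  -- the pair of Banach limits
  set B1 : LInf →L[ℝ] ℝ := t⁻¹ • (B.comp (ContinuousLinearMap.mul ℝ LInf m)) with hB1def
  set B2 : LInf →L[ℝ] ℝ :=
    (1-t)⁻¹ • (B.comp (ContinuousLinearMap.mul ℝ LInf (1 - m))) with hB2def
  have hB1app : ∀ x, B1 x = t⁻¹ * B (m * x) := by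
    intro x
    simp only [hB1def, ContinuousLinearMap.smul_apply, ContinuousLinearMap.comp_apply,
      ContinuousLinearMap.mul_apply', smul_eq_mul]
  have hB2app : ∀ x, B2 x = (1-t)⁻¹ * B ((1 - m) * x) := by
    intro x
    simp only [hB2def, ContinuousLinearMap.smul_apply, ContinuousLinearMap.comp_apply,
      ContinuousLinearMap.mul_apply', smul_eq_mul]
  -- the shift-multiplier trick
  have hWshift : ∀ (w σw : LInf), (∀ k, σw k = w (k+1)) →
      Tendsto (fun k => σw k - w k) atTop (nhds 0) →
      ∀ x : LInf, B (w * shift x) = B (w * x) := by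
    intro w σw hσ hslow x
    have heq : w * shift x = shift (σw * x) := by
      ext k
      simp only [BoundedContinuousFunction.coe_mul, Pi.mul_apply]
      rw [hshiftcoe, hshiftcoe]
      cases k with
      | zero => simp
      | succ j =>
          simp only [Nat.succ_ne_zero, if_false, Nat.add_sub_cancel]
          simp only [BoundedContinuousFunction.coe_mul, Pi.mul_apply]
          rw [hσ]
    have h1 : B (w * shift x) = B (σw * x) := by rw [heq, hBshift]
    have h2 : B (σw * x) - B (w * x) = B ((σw - w) * x) := by
      rw [← map_sub]
      congr 1
      ext k
      simp only [BoundedContinuousFunction.coe_sub, BoundedContinuousFunction.coe_mul,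
        Pi.sub_apply, Pi.mul_apply]
      ring
    have h3 : B ((σw - w) * x) = 0 := by
      apply hBnull
      apply squeeze_zero_norm (a := fun k => ‖x‖ * ‖σw k - w k‖)
      · intro k
        simp only [BoundedContinuousFunction.coe_sub, BoundedContinuousFunction.coe_mul,
          Pi.sub_apply, Pi.mul_apply]
        rw [Real.norm_eq_abs, Real.norm_eq_abs, abs_mul]
        have := habs x k
        have h4 : (0:ℝ) ≤ |σw k - w k| := abs_nonneg _
        nlinarith [abs_nonneg (x k)]
      · have h5 : Tendsto (fun k => ‖σw k - w k‖) atTop (nhds 0) := by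
          have := hslow.norm
          simpa using this
        simpa using h5.const_mul ‖x‖
    linarith
  have hmslow : Tendsto (fun k => σm k - m k) atTop (nhds 0) := by
    have hb : ∀ k : ℕ, ‖σm k - m k‖ ≤ 6/((k:ℝ)+1) := by
      intro k
      rw [hσcoe, hmcoe, Real.norm_eq_abs]
      exact mfun_slow k
    have htend : Tendsto (fun k : ℕ => 6/((k:ℝ)+1)) atTop (nhds 0) := by
      have h := tendsto_one_div_add_atTop_nhds_zero_nat.const_mul (6:ℝ)
      simp only [mul_zero] at h
      apply h.congr
      intro k
      field_simp
    exact squeeze_zero_norm hb htend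
  have hmslow2 : Tendsto (fun k => (1 - σm) k - (1 - m) k) atTop (nhds 0) := by
    have h := hmslow.neg
    rw [neg_zero] at h
    apply h.congr
    intro k
    simp only [BoundedContinuousFunction.coe_sub, BoundedContinuousFunction.coe_one,
      Pi.sub_apply, Pi.one_apply]
    ring
  -- B1 is a Banach limit
  have hB1BL : IsBanachLimit B1 := by
    refine ⟨?_, ?_, ?_⟩
    · intro x hx
      rw [hB1app]
      apply mul_nonneg (inv_nonneg.2 htnonneg)
      apply hBpos
      intro k
      simp only [BoundedContinuousFunction.coe_mul, Pi.mul_apply]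
      exact mul_nonneg (hm0 k) (hx k)
    · rw [hB1app, mul_one, ← ht, inv_mul_cancel₀ ht0.ne']
    · intro x
      rw [hB1app, hB1app, hWshift m σm hσcoe hmslow x]
  have hB2BL : IsBanachLimit B2 := by
    refine ⟨?_, ?_, ?_⟩
    · intro x hx
      rw [hB2app]
      apply mul_nonneg (inv_nonneg.2 (by linarith))
      apply hBpos
      intro k
      simp only [BoundedContinuousFunction.coe_mul, BoundedContinuousFunction.coe_sub,
        BoundedContinuousFunction.coe_one, Pi.mul_apply, Pi.sub_apply, Pi.one_apply]
      exact mul_nonneg (by linarith [hm1 k]) (hx k)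
    · rw [hB2app, mul_one, map_sub, hB1, ← ht, inv_mul_cancel₀ (by linarith : (1:ℝ) - t ≠ 0)]
    · intro x
      rw [hB2app, hB2app, hWshift (1-m) (1-σm) (fun k => by
          simp only [BoundedContinuousFunction.coe_sub, BoundedContinuousFunction.coe_one,
            Pi.sub_apply, Pi.one_apply]
          rw [hσcoe, hmcoe]) hmslow2 x]
  -- the decomposition B = t B1 + (1-t) B2
  have hdecomp : B = t • B1 + (1-t) • B2 := by
    ext x
    simp only [ContinuousLinearMap.add_apply, ContinuousLinearMap.smul_apply, smul_eq_mul]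
    rw [hB1app, hB2app]
    have h1 : t * (t⁻¹ * B (m * x)) = B (m * x) := by
      rw [← mul_assoc, mul_inv_cancel₀ ht0.ne', one_mul]
    have h2 : (1-t) * ((1-t)⁻¹ * B ((1-m) * x)) = B ((1-m) * x) := by
      have hne : (1:ℝ) - t ≠ 0 := by linarith
      rw [← mul_assoc, mul_inv_cancel₀ hne, one_mul]
    rw [h1, h2, ← map_add]
    congr 1
    ext k
    simp only [BoundedContinuousFunction.coe_add, BoundedContinuousFunction.coe_mul,
      BoundedContinuousFunction.coe_sub, BoundedContinuousFunction.coe_one,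
      Pi.add_apply, Pi.mul_apply, Pi.sub_apply, Pi.one_apply]
    ring
  -- conclude
  intro hext
  rw [mem_extremePoints] at hext
  have hseg : B ∈ openSegment ℝ B1 B2 :=
    ⟨t, 1-t, ht0, by linarith, by ring, hdecomp.symm⟩
  obtain ⟨hB1eq, -⟩ := hext.2 B1 hB1BL B2 hB2BL hseg
  have h1 : B1 m = B m := by rw [hB1eq]
  rw [hB1app, ← ht] at h1
  have h2 : B (m*m) = t * t := by
    have h3 := congrArg (fun z => t * z) h1
    rw [← mul_assoc, mul_inv_cancel₀ ht0.ne', one_mul] at h3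
    exact h3
  rw [h2] at hBmm
  nlinarith [hBmm]

end
end

section
/- For every extended limit γ on ℓ∞, the Banach limit B defined by Bx = log(2) · γ( n ↦ (1/n) Σ_{k=0}^∞ x_{k+1} 2^{−k/n} ) satisfies liminf_{k→∞} (Cx)_k ≤ Bx ≤ limsup_{k→∞} (Cx)_k for every x ∈ ℓ∞. -/
open Filter BoundedContinuousFunction

noncomputable section

private lemma le_of_forall_eps {a b : ℝ} (h : ∀ ε : ℝ, 0 < ε → a ≤ b + ε) : a ≤ b := by
  by_contra hc
  push_neg at hc
  have := h ((a - b) / 2) (by linarith)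
  linarith

private lemma real_liminf_eq_neg_limsup_neg (f : ℕ → ℝ) :
    Filter.liminf f Filter.atTop = - Filter.limsup (fun n => - f n) Filter.atTop := by
  rw [Filter.liminf_eq, Filter.limsup_eq, Real.sInf_def, neg_neg]
  congr 1
  ext a
  simp only [Set.mem_neg, Set.mem_setOf_eq, neg_le_neg_iff]

private def psum (y : LInf) (m : ℕ) : ℝ :=
  ∑ k ∈ Finset.range (m + 1), y k

private lemma psum_succ (y : LInf) (m : ℕ) :
    psum y (m + 1) = psum y m + y (m + 1) := by
  simp [psum, Finset.sum_range_succ]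

private lemma cesaro_apply (y : LInf) (m : ℕ) :
    cesaro y m = ((m : ℝ) + 1)⁻¹ * ∑ k ∈ Finset.range (m + 1), y k := by
  have h : cesaro y m = ((((m : ℕ) + 1 : ℕ) : ℝ))⁻¹ * ∑ k ∈ Finset.range (m + 1), y k := rfl
  rw [h]
  push_cast
  ring

private lemma abs_cesaro_le (y : LInf) (m : ℕ) : |cesaro y m| ≤ ‖y‖ := by
  have h1 : ‖cesaro y m‖ ≤ ‖cesaro y‖ := (cesaro y).norm_coe_le_norm m
  have h2 : ‖cesaro y‖ ≤ ‖y‖ := by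
    unfold cesaro
    exact BoundedContinuousFunction.norm_ofNormedAddCommGroup_le _ (norm_nonneg y) _
  rw [Real.norm_eq_abs] at h1
  linarith

private lemma mul_cesaro (y : LInf) (m : ℕ) :
    ((m : ℝ) + 1) * cesaro y m = psum y m := by
  rw [psum, cesaro_apply, ← mul_assoc, mul_inv_cancel₀ (by positivity), one_mul]

private lemma summable_geo' {r : ℝ} (h0 : 0 ≤ r) (h1 : r < 1) :
    Summable (fun m : ℕ => r ^ m) :=
  summable_geometric_of_lt_one h0 h1

private lemma summable_aux {r : ℝ} (h0 : 0 ≤ r) (h1 : r < 1) :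
    Summable (fun m : ℕ => ((m : ℝ) + 1) * r ^ m) := by
  have hr : ‖r‖ < 1 := by rwa [Real.norm_eq_abs, abs_of_nonneg h0]
  have h := summable_pow_mul_geometric_of_norm_lt_one (R := ℝ) 1 hr
  exact (h.add (summable_geo' h0 h1)).congr fun m => by push_cast [pow_one]; ring

private lemma summable_x {r : ℝ} (h0 : 0 ≤ r) (h1 : r < 1) (y : LInf) :
    Summable (fun k : ℕ => y k * r ^ k) := by
  refine Summable.of_norm_bounded ((summable_geo' h0 h1).mul_left ‖y‖) fun k => ?_
  rw [norm_mul, norm_pow, Real.norm_eq_abs r, abs_of_nonneg h0]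
  exact mul_le_mul_of_nonneg_right (y.norm_coe_le_norm k) (pow_nonneg h0 k)

private lemma abs_partial_sum_le (y : LInf) (m : ℕ) :
    |psum y m| ≤ ((m : ℝ) + 1) * ‖y‖ := by
  rw [psum]
  calc |∑ k ∈ Finset.range (m + 1), y k| ≤ ∑ k ∈ Finset.range (m + 1), |y k| :=
        Finset.abs_sum_le_sum_abs _ _
    _ ≤ ∑ k ∈ Finset.range (m + 1), ‖y‖ := by
        refine Finset.sum_le_sum fun k _ => ?_
        rw [← Real.norm_eq_abs]
        exact y.norm_coe_le_norm k
    _ = ((m : ℝ) + 1) * ‖y‖ := by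
        rw [Finset.sum_const, Finset.card_range, nsmul_eq_mul]
        push_cast
        ring

private lemma summable_S {r : ℝ} (h0 : 0 ≤ r) (h1 : r < 1) (y : LInf) :
    Summable (fun m : ℕ => psum y m * r ^ m) := by
  refine Summable.of_norm_bounded (((summable_aux h0 h1).mul_left ‖y‖)) fun m => ?_
  rw [norm_mul, norm_pow, Real.norm_eq_abs r, abs_of_nonneg h0, Real.norm_eq_abs]
  calc |psum y m| * r ^ m
      ≤ (((m : ℝ) + 1) * ‖y‖) * r ^ m :=
        mul_le_mul_of_nonneg_right (abs_partial_sum_le y m) (pow_nonneg h0 m)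
    _ = ‖y‖ * (((m : ℝ) + 1) * r ^ m) := by ring

private lemma summable_T {r : ℝ} (h0 : 0 ≤ r) (h1 : r < 1) (y : LInf) (c : ℝ) :
    Summable (fun m : ℕ => (((m : ℝ) + 1) * (cesaro y m - c)) * r ^ m) := by
  have h := (summable_S h0 h1 y).sub ((summable_aux h0 h1).mul_left c)
  refine h.congr fun m => ?_
  rw [← mul_cesaro y m]
  ring

private lemma abel_sum (y : LInf) {r : ℝ} (h0 : 0 ≤ r) (h1 : r < 1) :
    ∑' k : ℕ, y k * r ^ k = (1 - r) * ∑' m : ℕ, psum y m * r ^ m := by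
  have hS : Summable (fun m : ℕ => psum y m * r ^ m) := summable_S h0 h1 y
  have hy : Summable (fun k : ℕ => y k * r ^ k) := summable_x h0 h1 y
  have hS1 : Summable (fun m : ℕ => psum y (m + 1) * r ^ (m + 1)) :=
    hS.comp_injective (add_left_injective 1)
  have hS2 : Summable (fun m : ℕ => psum y m * r ^ (m + 1)) := by
    refine (hS.mul_left r).congr fun m => ?_
    ring
  have hA1 : ∑' m : ℕ, psum y m * r ^ m
      = y 0 + ∑' m : ℕ, psum y (m + 1) * r ^ (m + 1) := by
    rw [Summable.tsum_eq_zero_add hS]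
    norm_num [psum]
  have hA2 : ∑' m : ℕ, psum y m * r ^ (m + 1)
      = r * ∑' m : ℕ, psum y m * r ^ m := by
    calc ∑' m : ℕ, psum y m * r ^ (m + 1)
        = ∑' m : ℕ, r * (psum y m * r ^ m) := tsum_congr fun m => by ring
      _ = r * ∑' m : ℕ, psum y m * r ^ m := tsum_mul_left
  have h3 : (∑' m : ℕ, psum y (m + 1) * r ^ (m + 1)) - ∑' m : ℕ, psum y m * r ^ (m + 1)
      = ∑' m : ℕ, y (m + 1) * r ^ (m + 1) := by
    rw [← Summable.tsum_sub hS1 hS2]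
    refine tsum_congr fun m => ?_
    rw [psum_succ]
    ring
  have h4 : ∑' k : ℕ, y k * r ^ k = y 0 + ∑' m : ℕ, y (m + 1) * r ^ (m + 1) := by
    rw [Summable.tsum_eq_zero_add hy]
    norm_num
  rw [h4, ← h3, hA2, hA1]
  ring

private lemma tsum_geom1 {r : ℝ} (h0 : 0 ≤ r) (h1 : r < 1) :
    ∑' m : ℕ, ((m : ℝ) + 1) * r ^ m = ((1 - r) ^ 2)⁻¹ := by
  have hr : ‖r‖ < 1 := by rwa [Real.norm_eq_abs, abs_of_nonneg h0]
  have h2 := tsum_coe_mul_geometric_of_norm_lt_one hr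
  have h3 := tsum_geometric_of_lt_one h0 h1
  have h4 : Summable (fun n : ℕ => (n : ℝ) * r ^ n) := by
    simpa [pow_one] using summable_pow_mul_geometric_of_norm_lt_one (R := ℝ) 1 hr
  have h6 : ∑' m : ℕ, ((m : ℝ) + 1) * r ^ m = ∑' n : ℕ, ((n : ℝ) * r ^ n + r ^ n) :=
    tsum_congr fun m => by ring
  rw [h6, Summable.tsum_add h4 (summable_geo' h0 h1), h2, h3]
  have hne : (1 : ℝ) - r ≠ 0 := by linarith
  field_simp
  ring

private lemma key_estimate (y : LInf) (c : ℝ) (N : ℕ)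
    (hN : ∀ m, N ≤ m → cesaro y m ≤ c) (n : ℕ) :
    Real.log 2 * (((n : ℝ) + 1)⁻¹ * ∑' k : ℕ, y k * (2 : ℝ) ^ (-(k : ℝ) / ((n : ℝ) + 1)))
      ≤ c + |c| * (Real.log 2 * ((n : ℝ) + 1)⁻¹)
        + ((N : ℝ) * ((N : ℝ) * (‖y‖ + |c|))) * (Real.log 2 * ((n : ℝ) + 1)⁻¹) ^ 2 := by
  set t : ℝ := ((n : ℝ) + 1)⁻¹ with ht
  have ht0 : 0 < t := by rw [ht]; positivity
  have hl2 : 0 < Real.log 2 := Real.log_pos (by norm_num)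
  set a : ℝ := Real.log 2 * t with ha
  have ha0 : 0 < a := mul_pos hl2 ht0
  set r : ℝ := Real.exp (-a) with hrdef
  have hr0 : 0 < r := Real.exp_pos _
  have hr1 : r < 1 := by
    rw [hrdef]
    exact Real.exp_lt_one_iff.2 (by linarith)
  have h1r : 0 < 1 - r := by linarith
  have h1ra : 1 - r ≤ a := by
    have := Real.add_one_le_exp (-a)
    rw [← hrdef] at this
    linarith
  have hfrac : a ≤ (1 + a) * (1 - r) := by
    have hexp := Real.add_one_le_exp a
    have hmul : (1 + a) * r ≤ 1 := by
      have hre : r = (Real.exp a)⁻¹ := by rw [hrdef, Real.exp_neg]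
      rw [hre, ← div_eq_mul_inv, div_le_one (Real.exp_pos a)]
      linarith
    nlinarith
  have hK0 : (0 : ℝ) ≤ (N : ℝ) * ((N : ℝ) * (‖y‖ + |c|)) := by positivity
  -- rewrite the rpow as a geometric power
  have hpow : ∀ k : ℕ, (2 : ℝ) ^ (-(k : ℝ) / ((n : ℝ) + 1)) = r ^ k := by
    intro k
    rw [hrdef, ← Real.exp_nat_mul, Real.rpow_def_of_pos (by norm_num : (0 : ℝ) < 2)]
    congr 1
    rw [ha, ht, div_eq_mul_inv]
    ring
  have hts : (∑' k : ℕ, y k * (2 : ℝ) ^ (-(k : ℝ) / ((n : ℝ) + 1)))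
      = ∑' k : ℕ, y k * r ^ k := tsum_congr fun k => by rw [hpow k]
  set T : ℝ := ∑' m : ℕ, (((m : ℝ) + 1) * (cesaro y m - c)) * r ^ m with hT
  have hsumT : Summable (fun m : ℕ => (((m : ℝ) + 1) * (cesaro y m - c)) * r ^ m) :=
    summable_T hr0.le hr1 y c
  -- decomposition of the Abel sum
  have hdec : (∑' m : ℕ, psum y m * r ^ m)
      = T + c * ((1 - r) ^ 2)⁻¹ := by
    have hstep : (∑' m : ℕ, psum y m * r ^ m)
        = ∑' m : ℕ, ((((m : ℝ) + 1) * (cesaro y m - c)) * r ^ m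
            + c * (((m : ℝ) + 1) * r ^ m)) := by
      refine tsum_congr fun m => ?_
      rw [← mul_cesaro y m]
      ring
    rw [hstep, Summable.tsum_add hsumT ((summable_aux hr0.le hr1).mul_left c), tsum_mul_left,
      tsum_geom1 hr0.le hr1, hT]
  -- bound on T
  have hTle : T ≤ (N : ℝ) * ((N : ℝ) * (‖y‖ + |c|)) := by
    rw [hT, ← hsumT.sum_add_tsum_nat_add N]
    have htail : (∑' i : ℕ, ((((i + N : ℕ) : ℝ) + 1) * (cesaro y (i + N) - c)) * r ^ (i + N)) ≤ 0 := by
      refine tsum_nonpos fun i => ?_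
      have h1 : cesaro y (i + N) - c ≤ 0 := sub_nonpos.2 (hN _ (Nat.le_add_left N i))
      have h2 : (0 : ℝ) ≤ r ^ (i + N) := pow_nonneg hr0.le _
      have h3 : (0 : ℝ) ≤ ((i + N : ℕ) : ℝ) + 1 := by positivity
      exact mul_nonpos_of_nonpos_of_nonneg (mul_nonpos_of_nonneg_of_nonpos h3 h1) h2
    have hhead : (∑ i ∈ Finset.range N, (((i : ℝ) + 1) * (cesaro y i - c)) * r ^ i)
        ≤ (N : ℝ) * ((N : ℝ) * (‖y‖ + |c|)) := by
      calc (∑ i ∈ Finset.range N, (((i : ℝ) + 1) * (cesaro y i - c)) * r ^ i)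
          ≤ ∑ i ∈ Finset.range N, (N : ℝ) * (‖y‖ + |c|) := by
            refine Finset.sum_le_sum fun i hi => ?_
            have h1 : |cesaro y i - c| ≤ ‖y‖ + |c| := by
              have := abs_cesaro_le y i
              have h := abs_sub (cesaro y i) c
              calc |cesaro y i - c| ≤ |cesaro y i| + |c| := by
                    rw [sub_eq_add_neg]
                    exact (abs_add_le _ _).trans (by rw [abs_neg])
                _ ≤ ‖y‖ + |c| := by linarith
            have h2 : r ^ i ≤ 1 := pow_le_one₀ hr0.le hr1.le
            have h3 : ((i : ℝ) + 1) ≤ (N : ℝ) := by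
              exact_mod_cast Nat.succ_le_of_lt (Finset.mem_range.1 hi)
            have h4 : (0 : ℝ) ≤ r ^ i := pow_nonneg hr0.le i
            have h4 : (0 : ℝ) ≤ r ^ i := pow_nonneg hr0.le i
            have h6 : (0 : ℝ) ≤ (i : ℝ) + 1 := by positivity
            have h7 : (0 : ℝ) ≤ ‖y‖ + |c| := by positivity
            calc (((i : ℝ) + 1) * (cesaro y i - c)) * r ^ i
                ≤ |(((i : ℝ) + 1) * (cesaro y i - c)) * r ^ i| := le_abs_self _
              _ = (((i : ℝ) + 1) * |cesaro y i - c|) * r ^ i := by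
                  rw [abs_mul, abs_mul, abs_of_nonneg h6, abs_of_nonneg h4]
              _ ≤ ((N : ℝ) * (‖y‖ + |c|)) * 1 := by
                  refine mul_le_mul ?_ h2 h4 (by positivity)
                  exact mul_le_mul h3 h1 (abs_nonneg _) (by positivity)
              _ = (N : ℝ) * (‖y‖ + |c|) := mul_one _
        _ = (N : ℝ) * ((N : ℝ) * (‖y‖ + |c|)) := by
            rw [Finset.sum_const, Finset.card_range, nsmul_eq_mul]
    linarith
  -- assemble
  have hgoalL : Real.log 2 * (t * ∑' k : ℕ, y k * r ^ k)
      = c * (a / (1 - r)) + (a * (1 - r)) * T := by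
    rw [abel_sum y hr0.le hr1, hdec]
    have hne : (1 : ℝ) - r ≠ 0 := ne_of_gt h1r
    rw [ha]
    field_simp
    ring
  have hq1 : 1 ≤ a / (1 - r) := (one_le_div h1r).2 h1ra
  have hq2 : a / (1 - r) ≤ 1 + a := (div_le_iff₀ h1r).2 hfrac
  have hcq : c * (a / (1 - r)) ≤ c + |c| * a := by
    nlinarith [mul_nonneg (sub_nonneg.2 (le_abs_self c)) (sub_nonneg.2 hq1),
      mul_nonneg (abs_nonneg c) (sub_nonneg.2 hq2)]
  have hT2 : (a * (1 - r)) * T ≤ ((N : ℝ) * ((N : ℝ) * (‖y‖ + |c|))) * a ^ 2 := by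
    have e1 : (a * (1 - r)) * T ≤ (a * (1 - r)) * ((N : ℝ) * ((N : ℝ) * (‖y‖ + |c|))) :=
      mul_le_mul_of_nonneg_left hTle (mul_nonneg ha0.le h1r.le)
    nlinarith [mul_le_mul_of_nonneg_right (mul_le_mul_of_nonneg_left h1ra ha0.le) hK0]
  calc Real.log 2 * (t * ∑' k : ℕ, y k * (2 : ℝ) ^ (-(k : ℝ) / ((n : ℝ) + 1)))
      = c * (a / (1 - r)) + (a * (1 - r)) * T := by rw [hts, hgoalL]
    _ ≤ c + |c| * a + ((N : ℝ) * ((N : ℝ) * (‖y‖ + |c|))) * a ^ 2 := by linarith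
    _ = c + |c| * (Real.log 2 * t) + ((N : ℝ) * ((N : ℝ) * (‖y‖ + |c|))) * (Real.log 2 * t) ^ 2 := by
        rw [← ha]

private lemma ext_le_limsup (γ : LInf →L[ℝ] ℝ) (hγ : IsExtendedLimit γ) (w : LInf) :
    γ w ≤ Filter.limsup (fun n => w n) Filter.atTop := by
  refine le_of_forall_eps fun ε hε => ?_
  set L := Filter.limsup (fun n => w n) Filter.atTop with hLdef
  have hwb : ∀ n, |w n| ≤ ‖w‖ := fun n => by
    rw [← Real.norm_eq_abs]; exact w.norm_coe_le_norm n
  have hbdd : Filter.IsBoundedUnder (· ≤ ·) Filter.atTop (fun n => w n) :=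
    ⟨‖w‖, Filter.eventually_map.2 (Filter.Eventually.of_forall fun n =>
      (le_abs_self _).trans (hwb n))⟩
  have hev : ∀ᶠ n in Filter.atTop, w n < L + ε :=
    Filter.eventually_lt_of_limsup_lt (by linarith) hbdd
  set c := L + ε with hc
  let g : LInf := BoundedContinuousFunction.ofNormedAddCommGroup
    (fun n => max (w n) c) continuous_of_discreteTopology (‖w‖ + |c|) (fun n => by
      rw [Real.norm_eq_abs, abs_le]
      constructor
      · have := le_max_right (w n) c
        have := neg_abs_le c
        have := norm_nonneg w
        linarith
      · exact max_le (by linarith [le_abs_self (w n), hwb n, abs_nonneg c])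
          (by linarith [le_abs_self c, norm_nonneg w]))
  have hg_apply : ∀ n, g n = max (w n) c := fun n => rfl
  have hge : γ w ≤ γ g := by
    have hpos := hγ.1 (g - w) (fun n => by
      have hsub : (g - w) n = max (w n) c - w n := by
        rw [BoundedContinuousFunction.coe_sub]
        simp [hg_apply n]
      rw [hsub]
      have := le_max_left (w n) c
      linarith)
    rw [map_sub] at hpos
    linarith
  have hgc : γ g = c := by
    refine hγ.2 g c ?_
    have heq : ∀ᶠ n in Filter.atTop, g n = c :=
      hev.mono fun n hn => by rw [hg_apply n]; exact max_eq_right hn.le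
    exact Filter.Tendsto.congr' (heq.mono fun n hn => hn.symm) tendsto_const_nhds
  linarith

private lemma upper_bound (γ : LInf →L[ℝ] ℝ) (hγ : IsExtendedLimit γ)
    (Z : LInf → LInf)
    (hZ : ∀ (x : LInf) (n : ℕ),
      Z x n = (((n : ℝ) + 1))⁻¹ * ∑' k : ℕ, x k * (2 : ℝ) ^ (-(k : ℝ) / ((n : ℝ) + 1)))
    (B : LInf →L[ℝ] ℝ) (hB : ∀ x : LInf, B x = Real.log 2 * γ (Z x)) (y : LInf) :
    B y ≤ Filter.limsup (fun k => cesaro y k) Filter.atTop := by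
  set L := Filter.limsup (fun k => cesaro y k) Filter.atTop with hLdef
  have hbdd : Filter.IsBoundedUnder (· ≤ ·) Filter.atTop (fun k => cesaro y k) :=
    ⟨‖y‖, Filter.eventually_map.2 (Filter.Eventually.of_forall fun k =>
      (le_abs_self _).trans (abs_cesaro_le y k))⟩
  refine le_of_forall_eps fun ε hε => ?_
  obtain ⟨N, hN⟩ := Filter.eventually_atTop.1
    (Filter.eventually_lt_of_limsup_lt (by linarith : L < L + ε) hbdd)
  set K : ℝ := (N : ℝ) * ((N : ℝ) * (‖y‖ + |L + ε|)) with hK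
  have hkey : ∀ n : ℕ, Real.log 2 * (Z y) n
      ≤ (L + ε) + |L + ε| * (Real.log 2 * ((n : ℝ) + 1)⁻¹)
          + K * (Real.log 2 * ((n : ℝ) + 1)⁻¹) ^ 2 := by
    intro n
    rw [hZ y n]
    exact key_estimate y (L + ε) N (fun m hm => (hN m hm).le) n
  have hta : Filter.Tendsto (fun n : ℕ => Real.log 2 * ((n : ℝ) + 1)⁻¹)
      Filter.atTop (nhds 0) := by
    have h := tendsto_one_div_add_atTop_nhds_zero_nat (𝕜 := ℝ)
    have h' : Filter.Tendsto (fun n : ℕ => ((n : ℝ) + 1)⁻¹) Filter.atTop (nhds 0) := by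
      simpa [one_div] using h
    simpa using h'.const_mul (Real.log 2)
  have hg : Filter.Tendsto (fun n : ℕ => (L + ε) + |L + ε| * (Real.log 2 * ((n : ℝ) + 1)⁻¹)
      + K * (Real.log 2 * ((n : ℝ) + 1)⁻¹) ^ 2) Filter.atTop (nhds (L + ε)) := by
    have hconst : Filter.Tendsto (fun _ : ℕ => L + ε) Filter.atTop (nhds (L + ε)) :=
      tendsto_const_nhds
    have := (hconst.add (hta.const_mul |L + ε|)).add ((hta.pow 2).const_mul K)
    simpa using this
  have hfb : Filter.IsBoundedUnder (· ≥ ·) Filter.atTop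
      (fun n => Real.log 2 * (Z y) n) := by
    refine ⟨-(Real.log 2 * ‖Z y‖), Filter.eventually_map.2 (Filter.Eventually.of_forall
      fun n => ?_)⟩
    have h1 : ‖(Z y) n‖ ≤ ‖Z y‖ := (Z y).norm_coe_le_norm n
    rw [Real.norm_eq_abs] at h1
    have hl2 : 0 < Real.log 2 := Real.log_pos (by norm_num)
    nlinarith [neg_abs_le ((Z y) n)]
  have hlim : Filter.limsup (fun n => Real.log 2 * (Z y) n) Filter.atTop ≤ L + ε := by
    have h1 := Filter.limsup_le_limsup (Filter.Eventually.of_forall hkey)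
      hfb.isCoboundedUnder_le hg.isBoundedUnder_le
    rwa [hg.limsup_eq] at h1
  have hBy : γ (Real.log 2 • Z y) = B y := by
    rw [hB y, map_smul, smul_eq_mul]
  calc B y = γ (Real.log 2 • Z y) := hBy.symm
    _ ≤ Filter.limsup (fun n => (Real.log 2 • Z y) n) Filter.atTop := ext_le_limsup γ hγ _
    _ = Filter.limsup (fun n => Real.log 2 * (Z y) n) Filter.atTop := by
        have hcoe : (fun n => (Real.log 2 • Z y) n) = fun n => Real.log 2 * (Z y) n := by
          funext n
          simp
        rw [hcoe]
    _ ≤ L + ε := hlim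

/-- For every extended limit `γ`, the Banach limit
`Bx = log 2 · γ(n ↦ (1/n) ∑_{k≥0} x_{k+1} 2^{-k/n})` satisfies
`liminf_k (Cx)_k ≤ Bx ≤ limsup_k (Cx)_k` for every `x ∈ ℓ∞`. -/
theorem zeta_banach_limit_between_cesaro_liminf_limsup
    (γ : LInf →L[ℝ] ℝ) (hγ : IsExtendedLimit γ)
    (Z : LInf → LInf)
    (hZ : ∀ (x : LInf) (n : ℕ),
      Z x n = (((n : ℝ) + 1))⁻¹ * ∑' k : ℕ, x k * (2 : ℝ) ^ (-(k : ℝ) / ((n : ℝ) + 1)))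
    (B : LInf →L[ℝ] ℝ) (hB : ∀ x : LInf, B x = Real.log 2 * γ (Z x)) (x : LInf) :
    Filter.liminf (fun k => cesaro x k) Filter.atTop ≤ B x ∧
      B x ≤ Filter.limsup (fun k => cesaro x k) Filter.atTop := by
  constructor
  · have h2 : (fun k => cesaro (-x) k) = (fun k => - cesaro x k) := by
      funext k
      rw [cesaro_apply, cesaro_apply]
      simp only [BoundedContinuousFunction.coe_neg, Pi.neg_apply, Finset.sum_neg_distrib,
        mul_neg]
    have h3 := upper_bound γ hγ Z hZ B hB (-x)
    rw [h2] at h3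
    have h4 : Filter.liminf (fun k => cesaro x k) Filter.atTop
        = - Filter.limsup (fun k => - cesaro x k) Filter.atTop :=
      real_liminf_eq_neg_limsup_neg _
    rw [map_neg] at h3
    rw [h4]
    linarith
  · exact upper_bound γ hγ Z hZ B hB x

end
end

section
/- Let x ∈ ℓ∞ be the 0–1 sequence with x_n = 1 if 4^k ≤ n < 2·4^k for some integer k ≥ 0, and x_n = 0 otherwise. Then limsup_{n→∞} (Cx)_n = 2/3 and liminf_{n→∞} (Cx)_n = 1/3. -/
open Filter BoundedContinuousFunction

noncomputable section

/-- The 0–1 sequence whose (1-indexed) `n`-th entry is `1` iff `4^k ≤ n < 2·4^k` for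
some `k ≥ 0` (here 0-indexed: the entry at index `n` is for `n + 1`). -/
def zx : LInf :=
  BoundedContinuousFunction.ofNormedAddCommGroup
    (Set.indicator {n : ℕ | ∃ k : ℕ, 4 ^ k ≤ n + 1 ∧ n + 1 < 2 * 4 ^ k} (fun _ => (1 : ℝ)))
    continuous_of_discreteTopology 1
    (by
      intro n
      by_cases h : n ∈ {n : ℕ | ∃ k : ℕ, 4 ^ k ≤ n + 1 ∧ n + 1 < 2 * 4 ^ k} <;>
        simp [Set.indicator, h])

-- auxiliary development

lemma zx_eq_one {n : ℕ} (h : ∃ k : ℕ, 4 ^ k ≤ n + 1 ∧ n + 1 < 2 * 4 ^ k) : zx n = 1 := by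
  simp only [zx, BoundedContinuousFunction.coe_ofNormedAddCommGroup]
  exact Set.indicator_of_mem
    (show n ∈ {n : ℕ | ∃ k : ℕ, 4 ^ k ≤ n + 1 ∧ n + 1 < 2 * 4 ^ k} from h) (fun _ => (1 : ℝ))

lemma zx_eq_zero {n : ℕ} (h : ¬ ∃ k : ℕ, 4 ^ k ≤ n + 1 ∧ n + 1 < 2 * 4 ^ k) : zx n = 0 := by
  simp only [zx, BoundedContinuousFunction.coe_ofNormedAddCommGroup]
  exact Set.indicator_of_notMem
    (show n ∉ {n : ℕ | ∃ k : ℕ, 4 ^ k ≤ n + 1 ∧ n + 1 < 2 * 4 ^ k} from h) (fun _ => (1 : ℝ))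

def Ssum (N : ℕ) : ℝ := ∑ k ∈ Finset.range N, zx k

lemma Ssum_succ (N : ℕ) : Ssum (N + 1) = Ssum N + zx N := Finset.sum_range_succ _ _

lemma pow_pos4 (K : ℕ) : 1 ≤ 4 ^ K := Nat.one_le_pow _ _ (by norm_num)

lemma Ssum_add_ones (K : ℕ) : ∀ j, j ≤ 4 ^ K → Ssum (4 ^ K - 1 + j) = Ssum (4 ^ K - 1) + j := by
  intro j
  induction j with
  | zero => simp
  | succ i ih =>
    intro hj
    have h1 := pow_pos4 K
    have heq : 4 ^ K - 1 + (i + 1) = (4 ^ K - 1 + i) + 1 := by omega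
    rw [heq, Ssum_succ, ih (by omega), zx_eq_one ⟨K, by omega, by omega⟩]
    push_cast; ring

lemma Ssum_add_zeros (K : ℕ) : ∀ j, j ≤ 2 * 4 ^ K →
    Ssum (2 * 4 ^ K - 1 + j) = Ssum (2 * 4 ^ K - 1) := by
  intro j
  induction j with
  | zero => simp
  | succ i ih =>
    intro hj
    have h1 := pow_pos4 K
    have heq : 2 * 4 ^ K - 1 + (i + 1) = (2 * 4 ^ K - 1 + i) + 1 := by omega
    have hz : zx (2 * 4 ^ K - 1 + i) = 0 := by
      apply zx_eq_zero
      rintro ⟨k, hk1, hk2⟩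
      rcases le_or_gt k K with hkK | hkK
      · have : 2 * 4 ^ k ≤ 2 * 4 ^ K := by
          have := Nat.pow_le_pow_right (by norm_num : 1 ≤ 4) hkK
          omega
        omega
      · have : 4 ^ (K + 1) ≤ 4 ^ k := Nat.pow_le_pow_right (by norm_num) hkK
        have h4 : 4 ^ (K + 1) = 4 * 4 ^ K := by ring
        omega
    rw [heq, Ssum_succ, ih (by omega), hz, add_zero]

lemma Ssum_two_pow_eq (K : ℕ) :
    Ssum (2 * 4 ^ K - 1) = Ssum (4 ^ K - 1) + (4 ^ K : ℝ) := by
  have h1 := pow_pos4 K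
  have heq : 2 * 4 ^ K - 1 = 4 ^ K - 1 + 4 ^ K := by omega
  rw [heq, Ssum_add_ones K (4 ^ K) le_rfl]
  norm_num

lemma Ssum_pow (K : ℕ) : 3 * Ssum (4 ^ K - 1) = (4 : ℝ) ^ K - 1 := by
  induction K with
  | zero => simp [Ssum]
  | succ K ih =>
    have h1 := pow_pos4 K
    have heq : 4 ^ (K + 1) - 1 = 2 * 4 ^ K - 1 + 2 * 4 ^ K := by
      have : 4 ^ (K + 1) = 4 * 4 ^ K := by ring
      omega
    rw [heq, Ssum_add_zeros K (2 * 4 ^ K) le_rfl, Ssum_two_pow_eq]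
    have : (4 : ℝ) ^ (K + 1) = 4 * 4 ^ K := by ring
    rw [this]
    push_cast
    linarith

lemma Ssum_two_pow (K : ℕ) : 3 * Ssum (2 * 4 ^ K - 1) = (4 : ℝ) ^ (K + 1) - 1 := by
  rw [Ssum_two_pow_eq]
  have := Ssum_pow K
  have : (4 : ℝ) ^ (K + 1) = 4 * 4 ^ K := by ring
  push_cast
  linarith [Ssum_pow K]

lemma Ssum_bounds (N : ℕ) : (N : ℝ) ≤ 3 * Ssum N ∧ 3 * Ssum N ≤ 2 * N + 2 := by
  rcases Nat.eq_zero_or_pos N with hN | hN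
  · subst hN; simp [Ssum]
  set K := Nat.log 4 N with hK
  have h1 : 4 ^ K ≤ N := Nat.pow_log_le_self 4 (by omega)
  have h2 : N < 4 ^ (K + 1) := Nat.lt_pow_succ_log_self (by norm_num) N
  have hp := pow_pos4 K
  have h4 : 4 ^ (K + 1) = 4 * 4 ^ K := by ring
  rcases lt_or_ge N (2 * 4 ^ K) with hc | hc
  · -- N in [4^K, 2·4^K)
    set j := N - (4 ^ K - 1) with hj
    have hjle : j ≤ 4 ^ K := by omega
    have hNe : N = 4 ^ K - 1 + j := by omega
    have hS : Ssum N = Ssum (4 ^ K - 1) + j := by rw [hNe]; exact Ssum_add_ones K j hjle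
    have hSp := Ssum_pow K
    have hcast : (N : ℝ) = (4 : ℝ) ^ K - 1 + j := by
      have : N + 1 = 4 ^ K + j := by omega
      have := congrArg (fun x : ℕ => (x : ℝ)) this
      push_cast at this
      linarith
    have hc' : (N : ℝ) + 1 ≤ 2 * (4 : ℝ) ^ K := by exact_mod_cast Nat.succ_le_of_lt hc
    have h1' : ((4 : ℝ) ^ K) ≤ N := by exact_mod_cast h1
    constructor <;> [skip; skip] <;> rw [hS] <;> push_cast <;> nlinarith
  · -- N in [2·4^K, 4^{K+1})
    set j := N - (2 * 4 ^ K - 1) with hj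
    have hjle : j ≤ 2 * 4 ^ K := by omega
    have hNe : N = 2 * 4 ^ K - 1 + j := by omega
    have hS : Ssum N = Ssum (2 * 4 ^ K - 1) := by rw [hNe]; exact Ssum_add_zeros K j hjle
    have hSp := Ssum_two_pow K
    have hub : (N : ℝ) + 1 ≤ (4 : ℝ) ^ (K + 1) := by exact_mod_cast Nat.succ_le_of_lt h2
    have hlb : 2 * (4 : ℝ) ^ K ≤ N := by exact_mod_cast hc
    have h4' : (4 : ℝ) ^ (K + 1) = 4 * 4 ^ K := by ring
    constructor <;> rw [hS] <;> nlinarith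

lemma cesaro_zx_eq (n : ℕ) : cesaro zx n = (((n : ℝ)) + 1)⁻¹ * Ssum (n + 1) := by
  simp only [cesaro, BoundedContinuousFunction.coe_ofNormedAddCommGroup, Ssum]
  norm_num

lemma cesaro_zx_ge (n : ℕ) : 1 / 3 ≤ cesaro zx n := by
  have hpos : (0 : ℝ) < (n : ℝ) + 1 := by positivity
  have hb := (Ssum_bounds (n + 1)).1
  rw [cesaro_zx_eq, inv_mul_eq_div, le_div_iff₀ hpos]
  push_cast at hb
  linarith

lemma cesaro_zx_le (n : ℕ) : cesaro zx n ≤ 2 / 3 + 2 / 3 * (1 / ((n : ℝ) + 1)) := by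
  have hpos : (0 : ℝ) < (n : ℝ) + 1 := by positivity
  have hb := (Ssum_bounds (n + 1)).2
  rw [cesaro_zx_eq, inv_mul_eq_div, div_le_iff₀ hpos]
  have hexp : (2 / 3 + 2 / 3 * (1 / ((n : ℝ) + 1))) * ((n : ℝ) + 1)
      = 2 / 3 * ((n : ℝ) + 1) + 2 / 3 := by
    field_simp
  rw [hexp]
  push_cast at hb
  linarith

lemma cesaro_zx_low (K : ℕ) : cesaro zx (4 ^ (K + 1) - 2) = 1 / 3 := by
  have hp : 4 ≤ 4 ^ (K + 1) := by
    calc 4 = 4 ^ 1 := by norm_num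
    _ ≤ 4 ^ (K + 1) := Nat.pow_le_pow_right (by norm_num) (by omega)
  have heq : 4 ^ (K + 1) - 2 + 1 = 4 ^ (K + 1) - 1 := by omega
  rw [cesaro_zx_eq, heq]
  have hSp := Ssum_pow (K + 1)
  have hcast : ((4 ^ (K + 1) - 2 : ℕ) : ℝ) + 1 = (4 : ℝ) ^ (K + 1) - 1 := by
    have : ((4 ^ (K + 1) - 2 : ℕ) : ℝ) = (4 : ℝ) ^ (K + 1) - 2 := by
      push_cast [Nat.cast_sub (by omega : 2 ≤ 4 ^ (K + 1))]
      ring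
    rw [this]; ring
  rw [hcast]
  have hne : (4 : ℝ) ^ (K + 1) - 1 ≠ 0 := by
    have : (4 : ℝ) ≤ 4 ^ (K + 1) := by exact_mod_cast hp
    linarith
  field_simp
  linarith

lemma cesaro_zx_high (K : ℕ) : 2 / 3 ≤ cesaro zx (2 * 4 ^ K - 2) := by
  have hp := pow_pos4 K
  have heq : 2 * 4 ^ K - 2 + 1 = 2 * 4 ^ K - 1 := by omega
  rw [cesaro_zx_eq, heq]
  have hSp := Ssum_two_pow K
  have hcast : ((2 * 4 ^ K - 2 : ℕ) : ℝ) + 1 = 2 * (4 : ℝ) ^ K - 1 := by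
    push_cast [Nat.cast_sub (by omega : 2 ≤ 2 * 4 ^ K)]
    ring
  rw [hcast]
  have hppos : (1 : ℝ) ≤ (4 : ℝ) ^ K := by exact_mod_cast hp
  have hpos : (0 : ℝ) < 2 * (4 : ℝ) ^ K - 1 := by linarith
  rw [inv_mul_eq_div, le_div_iff₀ hpos]
  have h4' : (4 : ℝ) ^ (K + 1) = 4 * 4 ^ K := by ring
  nlinarith

/-- For the 0–1 sequence `x` with `xₙ = 1` iff `4^k ≤ n < 2·4^k` for some `k ≥ 0`, one has
`limsup_n (Cx)_n = 2/3` and `liminf_n (Cx)_n = 1/3`. -/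
theorem cesaro_zx_limsup_liminf :
    Filter.limsup (fun n => cesaro zx n) Filter.atTop = 2 / 3 ∧
      Filter.liminf (fun n => cesaro zx n) Filter.atTop = 1 / 3 := by
  set f : ℕ → ℝ := fun n => cesaro zx n with hf
  have hble : IsBoundedUnder (· ≤ ·) atTop f :=
    isBoundedUnder_of ⟨2 / 3 + 2 / 3, fun n => by
      have h := cesaro_zx_le n
      have : 1 / ((n : ℝ) + 1) ≤ 1 := by
        rw [div_le_one (by positivity)]
        have : (0:ℝ) ≤ n := Nat.cast_nonneg n
        linarith
      nlinarith⟩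
  have hbge : IsBoundedUnder (· ≥ ·) atTop f :=
    isBoundedUnder_of ⟨1 / 3, fun n => cesaro_zx_ge n⟩
  constructor
  · apply le_antisymm
    · have hg : Tendsto (fun n : ℕ => 2 / 3 + 2 / 3 * (1 / ((n : ℝ) + 1))) atTop (nhds (2 / 3)) := by
        have := (tendsto_one_div_add_atTop_nhds_zero_nat (𝕜 := ℝ)).const_mul (2 / 3)
        have h2 := (tendsto_const_nhds (x := (2:ℝ)/3) (f := (atTop : Filter ℕ))).add this
        simpa using h2
      calc limsup f atTop ≤ limsup (fun n : ℕ => 2 / 3 + 2 / 3 * (1 / ((n : ℝ) + 1))) atTop :=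
            limsup_le_limsup (Eventually.of_forall cesaro_zx_le)
              hbge.isCoboundedUnder_le (hg.isBoundedUnder_le)
        _ = 2 / 3 := hg.limsup_eq
    · apply le_limsup_of_frequently_le _ hble
      rw [frequently_atTop]
      intro N
      refine ⟨2 * 4 ^ N - 2, ?_, cesaro_zx_high N⟩
      have := Nat.lt_pow_self (n := N) (by norm_num : 1 < 4)
      omega
  · apply le_antisymm
    · apply liminf_le_of_frequently_le _ hbge
      rw [frequently_atTop]
      intro N
      refine ⟨4 ^ (N + 1) - 2, ?_, le_of_eq (cesaro_zx_low N)⟩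
      have h1 := Nat.lt_pow_self (n := N) (by norm_num : 1 < 4)
      have h2 : 4 ^ N ≤ 4 ^ (N + 1) := Nat.pow_le_pow_right (by norm_num) (by omega)
      omega
    · exact le_liminf_of_le hble.isCoboundedUnder_ge
        (Eventually.of_forall cesaro_zx_ge)


end
end
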